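/- arXiv:0907.4872 — 6 statements merged into one kernel-verified Lean document; each statement's English description precedes it below -/
import Mathlib

section
/- For r = (9/10, -11/20), the points z_1 = (-1,-1), z_2 = (-1,1), z_3 = (1,2), z_4 = (2,1), z_5 = (1,-1) form a purely periodic cycle under τ_r (τ_r maps z_1 → z_2 → z_3 → z_4 → z_5 → z_1), and for each i the preimage τ_r^{-1}(z_i) is the singleton {z_{i-1}} (indices mod 5). Consequently each SRS tile T_r(z_i) consists of the single point 0. -/
open Matrix Filter

noncomputable section

/-- Scalar product r·z of a real vector with an integer vector. -/
def srsDot {d : ℕ} (r : Fin d → ℝ) (z : Fin d → ℤ) : ℝ := ∑ i, r i * (z i : ℝ)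

/-- The shift radix map τ_r(z) = (z_1,...,z_{d-1}, -⌊r·z⌋). -/
def srsTau {d : ℕ} (r : Fin d → ℝ) (z : Fin d → ℤ) : Fin d → ℤ :=
  fun i => if h : (i : ℕ) + 1 < d then z ⟨(i : ℕ) + 1, h⟩ else -⌊srsDot r z⌋

/-- The companion matrix M_r of r. -/
def companion {d : ℕ} (r : Fin d → ℝ) : Matrix (Fin d) (Fin d) ℝ :=
  fun i j => if (i : ℕ) + 1 < d then (if (j : ℕ) = (i : ℕ) + 1 then 1 else 0) else -r j

/-- The vector (0,...,0,v)^t. -/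
def digitVec {d : ℕ} (v : ℝ) : Fin d → ℝ := fun i => if (i : ℕ) + 1 = d then v else 0

/-- Coordinatewise cast of an integer vector to a real vector. -/
def intToReal {d : ℕ} (z : Fin d → ℤ) : Fin d → ℝ := fun i => (z i : ℝ)

/-- M_r is contractive (spectral radius < 1). -/
def srsContractive {d : ℕ} (r : Fin d → ℝ) : Prop :=
  ∃ C > (0:ℝ), ∃ ρ : ℝ, 0 ≤ ρ ∧ ρ < 1 ∧
    ∀ (n : ℕ) (x : Fin d → ℝ), ‖((companion r) ^ n).mulVec x‖ ≤ C * ρ ^ n * ‖x‖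

/-- The SRS tile T_r(x), as the set of limit points lim M_r^n z_{-n} with
τ_r^n(z_{-n}) = x. -/
def srsTile {d : ℕ} (r : Fin d → ℝ) (x : Fin d → ℤ) : Set (Fin d → ℝ) :=
  {t | ∃ z : ℕ → (Fin d → ℤ), (∀ n, (srsTau r)^[n] (z n) = x) ∧
    Tendsto (fun n => ((companion r) ^ n).mulVec (intToReal (z n))) atTop (nhds t)}

def R : Fin 2 → ℝ := ![9/10, -11/20]
def Z1 : Fin 2 → ℤ := ![-1, -1]
def Z2 : Fin 2 → ℤ := ![-1, 1]
def Z3 : Fin 2 → ℤ := ![1, 2]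
def Z4 : Fin 2 → ℤ := ![2, 1]
def Z5 : Fin 2 → ℤ := ![1, -1]

lemma tau_apply (w : Fin 2 → ℤ) :
    srsTau R w = ![w 1, -⌊(9/10 : ℝ) * (w 0 : ℝ) - (11/20) * (w 1 : ℝ)⌋] := by
  funext i
  fin_cases i <;> simp [srsTau, srsDot, R, Fin.sum_univ_two] <;> ring_nf

lemma tau12 : srsTau R Z1 = Z2 := by
  rw [tau_apply]
  have : ⌊(9/10 : ℝ) * ((Z1 0 : ℤ) : ℝ) - (11/20) * ((Z1 1 : ℤ) : ℝ)⌋ = -1 := by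
    rw [Int.floor_eq_iff] <;> norm_num [Z1]
  rw [this]; funext i; fin_cases i <;> simp [Z1, Z2]

lemma tau23 : srsTau R Z2 = Z3 := by
  rw [tau_apply]
  have : ⌊(9/10 : ℝ) * ((Z2 0 : ℤ) : ℝ) - (11/20) * ((Z2 1 : ℤ) : ℝ)⌋ = -2 := by
    rw [Int.floor_eq_iff] <;> norm_num [Z2]
  rw [this]; funext i; fin_cases i <;> simp [Z2, Z3]

lemma tau34 : srsTau R Z3 = Z4 := by
  rw [tau_apply]
  have : ⌊(9/10 : ℝ) * ((Z3 0 : ℤ) : ℝ) - (11/20) * ((Z3 1 : ℤ) : ℝ)⌋ = -1 := by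
    rw [Int.floor_eq_iff] <;> norm_num [Z3]
  rw [this]; funext i; fin_cases i <;> simp [Z3, Z4]

lemma tau45 : srsTau R Z4 = Z5 := by
  rw [tau_apply]
  have : ⌊(9/10 : ℝ) * ((Z4 0 : ℤ) : ℝ) - (11/20) * ((Z4 1 : ℤ) : ℝ)⌋ = 1 := by
    rw [Int.floor_eq_iff] <;> norm_num [Z4]
  rw [this]; funext i; fin_cases i <;> simp [Z4, Z5]

lemma tau51 : srsTau R Z5 = Z1 := by
  rw [tau_apply]
  have : ⌊(9/10 : ℝ) * ((Z5 0 : ℤ) : ℝ) - (11/20) * ((Z5 1 : ℤ) : ℝ)⌋ = 1 := by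
    rw [Int.floor_eq_iff] <;> norm_num [Z5]
  rw [this]; funext i; fin_cases i <;> simp [Z5, Z1]

lemma pre_aux (w : Fin 2 → ℤ) (a b : ℤ) (hw : srsTau R w = ![a, b]) :
    w 1 = a ∧ -20*b + 11*a ≤ 18*(w 0) ∧ 18*(w 0) < 20 - 20*b + 11*a := by
  rw [tau_apply] at hw
  have h0 : w 1 = a := congrFun hw 0
  have h1 : -⌊(9/10 : ℝ) * (w 0 : ℝ) - (11/20) * (w 1 : ℝ)⌋ = b := congrFun hw 1
  have h2 : ⌊(9/10 : ℝ) * (w 0 : ℝ) - (11/20) * (w 1 : ℝ)⌋ = -b := by omega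
  rw [Int.floor_eq_iff] at h2
  obtain ⟨h3, h4⟩ := h2
  rw [h0] at h3 h4
  push_cast at h3 h4
  refine ⟨h0, ?_, ?_⟩
  · have : ((-20*b + 11*a : ℤ) : ℝ) ≤ ((18 * w 0 : ℤ) : ℝ) := by push_cast; linarith
    exact_mod_cast this
  · have : ((18 * w 0 : ℤ) : ℝ) < ((20 - 20*b + 11*a : ℤ) : ℝ) := by push_cast; linarith
    exact_mod_cast this

lemma funext2 (w : Fin 2 → ℤ) (a b : ℤ) (h0 : w 0 = a) (h1 : w 1 = b) : w = ![a, b] := by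
  funext i; fin_cases i <;> simpa

lemma pre1 (w : Fin 2 → ℤ) : srsTau R w = Z1 ↔ w = Z5 := by
  constructor
  · intro hw
    obtain ⟨h0, h1, h2⟩ := pre_aux w (-1) (-1) (by rw [hw]; rfl)
    exact funext2 w 1 (-1) (by omega) h0
  · rintro rfl; exact tau51

lemma pre2 (w : Fin 2 → ℤ) : srsTau R w = Z2 ↔ w = Z1 := by
  constructor
  · intro hw
    obtain ⟨h0, h1, h2⟩ := pre_aux w (-1) 1 (by rw [hw]; rfl)
    exact funext2 w (-1) (-1) (by omega) h0
  · rintro rfl; exact tau12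

lemma pre3 (w : Fin 2 → ℤ) : srsTau R w = Z3 ↔ w = Z2 := by
  constructor
  · intro hw
    obtain ⟨h0, h1, h2⟩ := pre_aux w 1 2 (by rw [hw]; rfl)
    exact funext2 w (-1) 1 (by omega) h0
  · rintro rfl; exact tau23

lemma pre4 (w : Fin 2 → ℤ) : srsTau R w = Z4 ↔ w = Z3 := by
  constructor
  · intro hw
    obtain ⟨h0, h1, h2⟩ := pre_aux w 2 1 (by rw [hw]; rfl)
    exact funext2 w 1 2 (by omega) h0
  · rintro rfl; exact tau34

lemma pre5 (w : Fin 2 → ℤ) : srsTau R w = Z5 ↔ w = Z4 := by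
  constructor
  · intro hw
    obtain ⟨h0, h1, h2⟩ := pre_aux w 1 (-1) (by rw [hw]; rfl)
    exact funext2 w 2 1 (by omega) h0
  · rintro rfl; exact tau45

lemma companion_R : companion R = !![0, 1; -(9/10), 11/20] := by
  funext i j
  fin_cases i <;> fin_cases j <;> simp [companion, R] <;> norm_num

lemma companion_R5 : (companion R) ^ 5 =
    !![2372040/3200000, 271220/3200000; -244098/3200000, 2521211/3200000] := by
  have h2 : (companion R) ^ 2 = !![-(9/10), 11/20; -(99/200), -(239/400)] := by
    rw [pow_two, companion_R, Matrix.mul_fin_two]; norm_num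
  have h4 : (companion R) ^ 4 = !![86040/160000, -131780/160000;
      118602/160000, 13561/160000] := by
    rw [show (4:ℕ) = 2 + 2 by rfl, pow_add, h2, Matrix.mul_fin_two]; norm_num
  rw [show (5:ℕ) = 4 + 1 by rfl, pow_add, pow_one, h4, companion_R, Matrix.mul_fin_two]
  norm_num

lemma mulVec_norm_le (a b c d : ℝ) (C : ℝ) (h1 : |a| + |b| ≤ C) (h2 : |c| + |d| ≤ C)
    (v : Fin 2 → ℝ) : ‖(!![a, b; c, d]).mulVec v‖ ≤ C * ‖v‖ := by
  have hC : 0 ≤ C := le_trans (by positivity) h1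
  rw [pi_norm_le_iff_of_nonneg (by positivity)]
  have hv0 : |v 0| ≤ ‖v‖ := by simpa [Real.norm_eq_abs] using norm_le_pi_norm v 0
  have hv1 : |v 1| ≤ ‖v‖ := by simpa [Real.norm_eq_abs] using norm_le_pi_norm v 1
  have hvn : 0 ≤ ‖v‖ := norm_nonneg v
  intro i
  fin_cases i <;>
  · simp only [Matrix.mulVec, dotProduct, Fin.sum_univ_two, Real.norm_eq_abs,
      Matrix.cons_val', Matrix.cons_val_zero, Matrix.cons_val_one, Matrix.head_cons,
      Matrix.empty_val', Matrix.cons_val_fin_one, Matrix.head_fin_const]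
    first
    | calc |a * v 0 + b * v 1| ≤ |a| * |v 0| + |b| * |v 1| := by
            refine (abs_add_le _ _).trans ?_; rw [abs_mul, abs_mul]
         _ ≤ C * ‖v‖ := by nlinarith [abs_nonneg a, abs_nonneg b, abs_nonneg (v 0), abs_nonneg (v 1)]
    | calc |c * v 0 + d * v 1| ≤ |c| * |v 0| + |d| * |v 1| := by
            refine (abs_add_le _ _).trans ?_; rw [abs_mul, abs_mul]
         _ ≤ C * ‖v‖ := by nlinarith [abs_nonneg c, abs_nonneg d, abs_nonneg (v 0), abs_nonneg (v 1)]

lemma step1 (v : Fin 2 → ℝ) : ‖(companion R).mulVec v‖ ≤ (29/20) * ‖v‖ := by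
  rw [companion_R]; refine mulVec_norm_le _ _ _ _ _ ?_ ?_ v
  · rw [abs_of_nonneg (by norm_num), abs_of_nonneg (by norm_num)]; norm_num
  · rw [abs_neg, abs_of_nonneg (by norm_num), abs_of_nonneg (by norm_num)]; norm_num

lemma step5 (v : Fin 2 → ℝ) : ‖((companion R) ^ 5).mulVec v‖ ≤ (87/100) * ‖v‖ := by
  rw [companion_R5]
  refine mulVec_norm_le _ _ _ _ _ ?_ ?_ v
  · rw [abs_of_nonneg (by norm_num), abs_of_nonneg (by norm_num)]; norm_num
  · rw [abs_of_nonpos (by norm_num), abs_of_nonneg (by norm_num)]; norm_num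

lemma pow1_bound : ∀ (s : ℕ) (v : Fin 2 → ℝ),
    ‖((companion R) ^ s).mulVec v‖ ≤ (29/20) ^ s * ‖v‖ := by
  intro s
  induction s with
  | zero => intro v; simp [Matrix.one_mulVec]
  | succ n ih =>
    intro v
    have : (companion R) ^ (n + 1) = (companion R) ^ n * companion R := pow_succ _ _
    rw [this, ← Matrix.mulVec_mulVec]
    calc ‖((companion R) ^ n).mulVec ((companion R).mulVec v)‖
        ≤ (29/20) ^ n * ‖(companion R).mulVec v‖ := ih _
      _ ≤ (29/20) ^ n * ((29/20) * ‖v‖) := by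
          have := step1 v
          have hp : (0:ℝ) ≤ (29/20) ^ n := by positivity
          nlinarith
      _ = (29/20) ^ (n+1) * ‖v‖ := by ring

lemma pow5_bound : ∀ (q : ℕ) (v : Fin 2 → ℝ),
    ‖(((companion R) ^ 5) ^ q).mulVec v‖ ≤ (87/100) ^ q * ‖v‖ := by
  intro q
  induction q with
  | zero => intro v; simp [Matrix.one_mulVec]
  | succ n ih =>
    intro v
    rw [pow_succ, ← Matrix.mulVec_mulVec]
    calc ‖(((companion R) ^ 5) ^ n).mulVec (((companion R) ^ 5).mulVec v)‖
        ≤ (87/100) ^ n * ‖((companion R) ^ 5).mulVec v‖ := ih _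
      _ ≤ (87/100) ^ n * ((87/100) * ‖v‖) := by
          have := step5 v
          have hp : (0:ℝ) ≤ (87/100) ^ n := by positivity
          nlinarith
      _ = (87/100) ^ (n+1) * ‖v‖ := by ring

lemma myTendstoZero (u : ℕ → Fin 2 → ℝ) (hu : ∀ n, ‖u n‖ ≤ 2) :
    Tendsto (fun n => ((companion R) ^ n).mulVec (u n)) atTop (nhds 0) := by
  apply squeeze_zero_norm (a := fun n => 9 * (87/100 : ℝ) ^ (n / 5))
  · intro n
    have hdecomp : (companion R) ^ n = ((companion R) ^ 5) ^ (n / 5) * (companion R) ^ (n % 5) := by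
      rw [← pow_mul, ← pow_add]
      congr 1
      omega
    rw [hdecomp, ← Matrix.mulVec_mulVec]
    calc ‖(((companion R) ^ 5) ^ (n / 5)).mulVec (((companion R) ^ (n % 5)).mulVec (u n))‖
        ≤ (87/100) ^ (n / 5) * ‖((companion R) ^ (n % 5)).mulVec (u n)‖ := pow5_bound _ _
      _ ≤ 9 * (87/100) ^ (n / 5) := by
          have h1 : ‖((companion R) ^ (n % 5)).mulVec (u n)‖ ≤ (29/20) ^ (n % 5) * ‖u n‖ :=
            pow1_bound _ _
          have h2 : ((29:ℝ)/20) ^ (n % 5) ≤ (29/20) ^ 4 := by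
            apply pow_le_pow_right₀ (by norm_num)
            omega
          have h3 : ‖((companion R) ^ (n % 5)).mulVec (u n)‖ ≤ (29/20) ^ 4 * 2 := by
            have hun := hu n
            have hnn : (0:ℝ) ≤ ‖u n‖ := norm_nonneg _
            calc ‖((companion R) ^ (n % 5)).mulVec (u n)‖
                ≤ (29/20) ^ (n % 5) * ‖u n‖ := h1
              _ ≤ (29/20) ^ 4 * 2 := by nlinarith [pow_nonneg (by norm_num : (0:ℝ) ≤ 29/20) (n % 5)]
          have hp : (0:ℝ) ≤ (87/100) ^ (n / 5) := by positivity
          nlinarith [norm_nonneg (((companion R) ^ (n % 5)).mulVec (u n))]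
  · have h1 : Tendsto (fun k : ℕ => (87/100 : ℝ) ^ k) atTop (nhds 0) :=
      tendsto_pow_atTop_nhds_zero_of_lt_one (by norm_num) (by norm_num)
    have h2 : Tendsto (fun n : ℕ => n / 5) atTop atTop :=
      tendsto_atTop_atTop.2 (fun b => ⟨5 * b + 5, fun n hn => by omega⟩)
    have := (h1.comp h2).const_mul (9:ℝ)
    simpa using this

def cyc (n : ℕ) : Fin 2 → ℤ :=
  if n % 5 = 0 then Z1 else if n % 5 = 1 then Z2 else if n % 5 = 2 then Z3
  else if n % 5 = 3 then Z4 else Z5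

lemma cyc_congr {m k : ℕ} (h : m % 5 = k % 5) : cyc m = cyc k := by
  unfold cyc; rw [h]

lemma cyc_eq0 {n : ℕ} (h : n % 5 = 0) : cyc n = Z1 := by simp [cyc, h]
lemma cyc_eq1 {n : ℕ} (h : n % 5 = 1) : cyc n = Z2 := by simp [cyc, h]
lemma cyc_eq2 {n : ℕ} (h : n % 5 = 2) : cyc n = Z3 := by simp [cyc, h]
lemma cyc_eq3 {n : ℕ} (h : n % 5 = 3) : cyc n = Z4 := by simp [cyc, h]
lemma cyc_eq4 {n : ℕ} (h : n % 5 = 4) : cyc n = Z5 := by simp [cyc, h]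

lemma tau_cyc (j : ℕ) : srsTau R (cyc j) = cyc (j + 1) := by
  have h : j % 5 = 0 ∨ j % 5 = 1 ∨ j % 5 = 2 ∨ j % 5 = 3 ∨ j % 5 = 4 := by omega
  rcases h with h | h | h | h | h
  · rw [cyc_eq0 h, cyc_eq1 (show (j+1) % 5 = 1 by omega)]; exact tau12
  · rw [cyc_eq1 h, cyc_eq2 (show (j+1) % 5 = 2 by omega)]; exact tau23
  · rw [cyc_eq2 h, cyc_eq3 (show (j+1) % 5 = 3 by omega)]; exact tau34
  · rw [cyc_eq3 h, cyc_eq4 (show (j+1) % 5 = 4 by omega)]; exact tau45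
  · rw [cyc_eq4 h, cyc_eq0 (show (j+1) % 5 = 0 by omega)]; exact tau51

lemma tau_pre_cyc (j : ℕ) (a : Fin 2 → ℤ) (h : srsTau R a = cyc (j + 1)) : a = cyc j := by
  have h5 : j % 5 = 0 ∨ j % 5 = 1 ∨ j % 5 = 2 ∨ j % 5 = 3 ∨ j % 5 = 4 := by omega
  rcases h5 with h5 | h5 | h5 | h5 | h5
  · rw [cyc_eq1 (show (j+1) % 5 = 1 by omega)] at h; rw [cyc_eq0 h5]; exact (pre2 a).1 h
  · rw [cyc_eq2 (show (j+1) % 5 = 2 by omega)] at h; rw [cyc_eq1 h5]; exact (pre3 a).1 h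
  · rw [cyc_eq3 (show (j+1) % 5 = 3 by omega)] at h; rw [cyc_eq2 h5]; exact (pre4 a).1 h
  · rw [cyc_eq4 (show (j+1) % 5 = 4 by omega)] at h; rw [cyc_eq3 h5]; exact (pre5 a).1 h
  · rw [cyc_eq0 (show (j+1) % 5 = 0 by omega)] at h; rw [cyc_eq4 h5]; exact (pre1 a).1 h

lemma tau_iter_cyc (n j : ℕ) : (srsTau R)^[n] (cyc j) = cyc (j + n) := by
  induction n generalizing j with
  | zero => rfl
  | succ m ih =>
    rw [Function.iterate_succ_apply, tau_cyc, ih]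
    exact cyc_congr (by omega)

lemma tau_iter_pre (n : ℕ) : ∀ (j : ℕ) (a : Fin 2 → ℤ),
    (srsTau R)^[n] a = cyc (j + n) → a = cyc j := by
  induction n with
  | zero => intro j a h; simpa using h
  | succ m ih =>
    intro j a h
    rw [Function.iterate_succ_apply] at h
    have h2 : srsTau R a = cyc (j + 1) :=
      ih (j + 1) (srsTau R a) (by rw [show j + 1 + m = j + (m+1) from by omega]; exact h)
    exact tau_pre_cyc j a h2

lemma cyc_norm (n : ℕ) : ‖intToReal (cyc n)‖ ≤ 2 := by
  rw [pi_norm_le_iff_of_nonneg (by norm_num)]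
  intro i
  unfold cyc
  split_ifs <;> fin_cases i <;>
    simp [intToReal, Z1, Z2, Z3, Z4, Z5, Real.norm_eq_abs]

lemma tile_cyc (j : ℕ) : srsTile R (cyc (j + 1)) = {0} := by
  ext t
  simp only [Set.mem_singleton_iff, srsTile, Set.mem_setOf_eq]
  constructor
  · rintro ⟨z, hz, hlim⟩
    have hzn : ∀ n, z n = cyc (j + 1 + 4 * n) := by
      intro n
      apply tau_iter_pre n (j + 1 + 4 * n)
      rw [show j + 1 + 4 * n + n = j + 1 + 5 * n from by omega]
      rw [← cyc_congr (show (j + 1 + 5 * n) % 5 = (j + 1) % 5 from by omega)] at hz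
      exact hz n
    have h0 : Tendsto (fun n => ((companion R) ^ n).mulVec (intToReal (z n))) atTop (nhds 0) := by
      apply myTendstoZero
      intro n; rw [hzn n]; exact cyc_norm _
    exact tendsto_nhds_unique hlim h0
  · rintro rfl
    refine ⟨fun n => cyc (j + 1 + 4 * n), fun n => ?_, ?_⟩
    · rw [tau_iter_cyc]
      exact cyc_congr (by omega)
    · exact myTendstoZero _ (fun n => cyc_norm _)

/-- for r = (9/10, -11/20), the five listed points form a purely
periodic cycle, each has a singleton preimage, and each of their SRS tiles is {0}. -/
theorem srsTile_singleton_example :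
    let r : Fin 2 → ℝ := ![9/10, -11/20]
    let z1 : Fin 2 → ℤ := ![-1, -1]
    let z2 : Fin 2 → ℤ := ![-1, 1]
    let z3 : Fin 2 → ℤ := ![1, 2]
    let z4 : Fin 2 → ℤ := ![2, 1]
    let z5 : Fin 2 → ℤ := ![1, -1]
    srsTau r z1 = z2 ∧ srsTau r z2 = z3 ∧ srsTau r z3 = z4 ∧
    srsTau r z4 = z5 ∧ srsTau r z5 = z1 ∧
    (∀ w : Fin 2 → ℤ, srsTau r w = z1 ↔ w = z5) ∧
    (∀ w : Fin 2 → ℤ, srsTau r w = z2 ↔ w = z1) ∧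
    (∀ w : Fin 2 → ℤ, srsTau r w = z3 ↔ w = z2) ∧
    (∀ w : Fin 2 → ℤ, srsTau r w = z4 ↔ w = z3) ∧
    (∀ w : Fin 2 → ℤ, srsTau r w = z5 ↔ w = z4) ∧
    srsTile r z1 = {0} ∧ srsTile r z2 = {0} ∧ srsTile r z3 = {0} ∧
    srsTile r z4 = {0} ∧ srsTile r z5 = {0} := by
  intro r z1 z2 z3 z4 z5
  refine ⟨tau12, tau23, tau34, tau45, tau51, pre1, pre2, pre3, pre4, pre5, ?_, ?_, ?_, ?_, ?_⟩
  · have h := tile_cyc 4; rwa [cyc_eq0 (by norm_num)] at h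
  · have h := tile_cyc 0; rwa [cyc_eq1 (by norm_num)] at h
  · have h := tile_cyc 1; rwa [cyc_eq2 (by norm_num)] at h
  · have h := tile_cyc 2; rwa [cyc_eq3 (by norm_num)] at h
  · have h := tile_cyc 3; rwa [cyc_eq4 (by norm_num)] at h
end
end

section
/- Let r ∈ ℝ with 0 < r < 1, and τ_r : ℤ → ℤ given by τ_r(z) = -⌊rz⌋. If x_0 > y_0 are integers, then for every n ∈ ℕ and every x_n ∈ τ_r^{-n}(x_0), y_n ∈ τ_r^{-n}(y_0), one has (-1)^n x_n > (-1)^n y_n. Consequently, for distinct x, y ∈ ℤ the one-dimensional SRS tiles T_r(x) and T_r(y) intersect in at most one point, and {T_r(x) : x ∈ ℤ} is a tiling of ℝ by (possibly degenerate) intervals. -/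
set_option maxHeartbeats 1000000


open Filter

noncomputable section

/-- One-dimensional shift radix map τ_r(z) = -⌊rz⌋. -/
def tau1 (r : ℝ) (z : ℤ) : ℤ := -⌊r * (z : ℝ)⌋

/-- One-dimensional SRS tile T_r(x) = Lim (-r)^n τ_r^{-n}(x). -/
def tile1 (r : ℝ) (x : ℤ) : Set ℝ :=
  {t | ∃ z : ℕ → ℤ, (∀ n, (tau1 r)^[n] (z n) = x) ∧
    Tendsto (fun n => (-r) ^ n * ((z n : ℤ) : ℝ)) atTop (nhds t)}

namespace Tile1Aux

/-- Endpoints of the integer interval `τ_r^{-n}(x)`. -/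
def ep (r : ℝ) (x : ℤ) : ℕ → ℤ × ℤ
  | 0 => (x, x)
  | n + 1 => (⌈(-((ep r x n).2 : ℝ)) / r⌉, ⌈((1 : ℝ) - ((ep r x n).1 : ℝ)) / r⌉ - 1)

variable {r : ℝ}

lemma ep_le (h0 : 0 < r) (h1 : r < 1) (x : ℤ) : ∀ n, (ep r x n).1 ≤ (ep r x n).2 := by
  intro n
  induction n with
  | zero => simp [ep]
  | succ n ih =>
    show ⌈(-((ep r x n).2 : ℝ)) / r⌉ ≤ ⌈((1 : ℝ) - ((ep r x n).1 : ℝ)) / r⌉ - 1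
    set a := (ep r x n).1 with ha
    set b := (ep r x n).2 with hb
    have hcast : (a : ℝ) ≤ (b : ℝ) := by exact_mod_cast ih
    have h2 : ((⌈(-(b : ℝ)) / r⌉ : ℤ) : ℝ) < (-(b : ℝ)) / r + 1 := Int.ceil_lt_add_one _
    have h3 : (-(b : ℝ)) / r + 1 ≤ ((1 : ℝ) - a) / r := by
      rw [div_add' _ _ _ h0.ne']
      gcongr
      nlinarith
    have h4 : (⌈(-(b : ℝ)) / r⌉ : ℤ) < ⌈((1 : ℝ) - a) / r⌉ := by
      rw [Int.lt_ceil]; linarith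
    omega

lemma iterate_eq_iff (h0 : 0 < r) (x : ℤ) :
    ∀ n z, (tau1 r)^[n] z = x ↔ ((ep r x n).1 ≤ z ∧ z ≤ (ep r x n).2) := by
  intro n
  induction n with
  | zero =>
    intro z
    simp only [Function.iterate_zero, id_eq, ep]
    omega
  | succ n ih =>
    intro z
    rw [Function.iterate_succ_apply, ih (tau1 r z)]
    set a := (ep r x n).1 with ha
    set b := (ep r x n).2 with hb
    show a ≤ -⌊r * (z : ℝ)⌋ ∧ -⌊r * (z : ℝ)⌋ ≤ b ↔
      ⌈(-(b : ℝ)) / r⌉ ≤ z ∧ z ≤ ⌈((1 : ℝ) - (a : ℝ)) / r⌉ - 1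
    have hleft : (-⌊r * (z : ℝ)⌋ ≤ b) ↔ (⌈(-(b : ℝ)) / r⌉ ≤ z) := by
      constructor
      · intro h
        have h' : ((-b : ℤ) : ℝ) ≤ r * (z : ℝ) := Int.le_floor.mp (by omega)
        apply Int.ceil_le.mpr
        rw [div_le_iff₀ h0]
        push_cast at h' ⊢
        linarith
      · intro h
        have h' : (-(b : ℝ)) / r ≤ (z : ℝ) := Int.ceil_le.mp h
        rw [div_le_iff₀ h0] at h'
        have h'' : ((-b : ℤ) : ℝ) ≤ r * (z : ℝ) := by push_cast; linarith
        have := Int.le_floor.mpr h''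
        omega
    have hright : (a ≤ -⌊r * (z : ℝ)⌋) ↔ (z ≤ ⌈((1 : ℝ) - (a : ℝ)) / r⌉ - 1) := by
      have e1 : (a ≤ -⌊r * (z : ℝ)⌋) ↔ ⌊r * (z : ℝ)⌋ < -a + 1 := by omega
      have e2 : ⌊r * (z : ℝ)⌋ < -a + 1 ↔ r * (z : ℝ) < ((-a + 1 : ℤ) : ℝ) := Int.floor_lt
      have e3 : r * (z : ℝ) < ((-a + 1 : ℤ) : ℝ) ↔ (z : ℝ) < ((1 : ℝ) - a) / r := by
        rw [lt_div_iff₀ h0]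
        push_cast
        constructor <;> intro <;> linarith
      have e4 : (z : ℝ) < ((1 : ℝ) - a) / r ↔ z < ⌈((1 : ℝ) - (a : ℝ)) / r⌉ := (Int.lt_ceil).symm
      rw [e1, e2, e3, e4]
      omega
    constructor
    · rintro ⟨hl, hr⟩; exact ⟨hleft.mp hr, hright.mp hl⟩
    · rintro ⟨hl, hr⟩; exact ⟨hright.mpr hr, hleft.mpr hl⟩

/-- Lower endpoint of the scaled interval `(-r)^n τ^{-n}(x)`. -/
def pseq (r : ℝ) (x : ℤ) (n : ℕ) : ℝ :=
  min ((-r) ^ n * ((ep r x n).1 : ℝ)) ((-r) ^ n * ((ep r x n).2 : ℝ))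

/-- Upper endpoint of the scaled interval `(-r)^n τ^{-n}(x)`. -/
def qseq (r : ℝ) (x : ℤ) (n : ℕ) : ℝ :=
  max ((-r) ^ n * ((ep r x n).1 : ℝ)) ((-r) ^ n * ((ep r x n).2 : ℝ))

lemma pseq_even (h0 : 0 < r) (h1 : r < 1) (x : ℤ) {n : ℕ} (hn : Even n) :
    pseq r x n = r ^ n * ((ep r x n).1 : ℝ) := by
  have hab : ((ep r x n).1 : ℝ) ≤ ((ep r x n).2 : ℝ) := by exact_mod_cast ep_le h0 h1 x n
  have hpow : (0 : ℝ) ≤ r ^ n := pow_nonneg h0.le n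
  unfold pseq
  rw [hn.neg_pow]
  exact min_eq_left (by nlinarith)

lemma pseq_odd (h0 : 0 < r) (h1 : r < 1) (x : ℤ) {n : ℕ} (hn : Odd n) :
    pseq r x n = -(r ^ n * ((ep r x n).2 : ℝ)) := by
  have hab : ((ep r x n).1 : ℝ) ≤ ((ep r x n).2 : ℝ) := by exact_mod_cast ep_le h0 h1 x n
  have hpow : (0 : ℝ) ≤ r ^ n := pow_nonneg h0.le n
  unfold pseq
  rw [hn.neg_pow]
  have e1 : -(r ^ n) * ((ep r x n).1 : ℝ) = -(r ^ n * ((ep r x n).1 : ℝ)) := by ring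
  have e2 : -(r ^ n) * ((ep r x n).2 : ℝ) = -(r ^ n * ((ep r x n).2 : ℝ)) := by ring
  rw [e1, e2]
  exact min_eq_right (by nlinarith)

lemma qseq_even (h0 : 0 < r) (h1 : r < 1) (x : ℤ) {n : ℕ} (hn : Even n) :
    qseq r x n = r ^ n * ((ep r x n).2 : ℝ) := by
  have hab : ((ep r x n).1 : ℝ) ≤ ((ep r x n).2 : ℝ) := by exact_mod_cast ep_le h0 h1 x n
  have hpow : (0 : ℝ) ≤ r ^ n := pow_nonneg h0.le n
  unfold qseq
  rw [hn.neg_pow]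
  exact max_eq_right (by nlinarith)

lemma qseq_odd (h0 : 0 < r) (h1 : r < 1) (x : ℤ) {n : ℕ} (hn : Odd n) :
    qseq r x n = -(r ^ n * ((ep r x n).1 : ℝ)) := by
  have hab : ((ep r x n).1 : ℝ) ≤ ((ep r x n).2 : ℝ) := by exact_mod_cast ep_le h0 h1 x n
  have hpow : (0 : ℝ) ≤ r ^ n := pow_nonneg h0.le n
  unfold qseq
  rw [hn.neg_pow]
  have e1 : -(r ^ n) * ((ep r x n).1 : ℝ) = -(r ^ n * ((ep r x n).1 : ℝ)) := by ring
  have e2 : -(r ^ n) * ((ep r x n).2 : ℝ) = -(r ^ n * ((ep r x n).2 : ℝ)) := by ring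
  rw [e1, e2]
  exact max_eq_left (by nlinarith)

lemma pseq_step (h0 : 0 < r) (h1 : r < 1) (x : ℤ) (n : ℕ) :
    dist (pseq r x n) (pseq r x (n + 1)) ≤ 1 * r ^ n := by
  have hrn : (0 : ℝ) < r ^ n := pow_pos h0 n
  have hrn1 : (0 : ℝ) < r ^ (n + 1) := pow_pos h0 (n + 1)
  have hpow : r ^ (n + 1) = r ^ n * r := pow_succ r n
  rcases Nat.even_or_odd n with hn | hn
  · have h2 := pseq_even h0 h1 x hn
    have h3 := pseq_odd h0 h1 x (n := n + 1) (by simpa [Nat.even_add_one, Nat.odd_add_one] using hn)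
    set a := (ep r x n).1 with ha
    have hep : (ep r x (n + 1)).2 = ⌈((1 : ℝ) - (a : ℝ)) / r⌉ - 1 := rfl
    set u := ((1 : ℝ) - (a : ℝ)) / r with hu
    have hb1 : u ≤ (⌈u⌉ : ℝ) := Int.le_ceil u
    have hb2 : ((⌈u⌉ : ℤ) : ℝ) < u + 1 := Int.ceil_lt_add_one u
    have hkey : r ^ (n + 1) * u = r ^ n * (1 - (a : ℝ)) := by
      rw [hpow, hu]; field_simp
    rw [h2, h3, hep, Real.dist_eq, abs_le]
    push_cast
    constructor
    · nlinarith [mul_le_mul_of_nonneg_left (show u - 1 ≤ (⌈u⌉ : ℝ) - 1 by linarith) hrn1.le]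
    · nlinarith [mul_le_mul_of_nonneg_left (show (⌈u⌉ : ℝ) - 1 ≤ u by linarith) hrn1.le]
  · have h2 := pseq_odd h0 h1 x hn
    have h3 := pseq_even h0 h1 x (n := n + 1) (by simpa [Nat.even_add_one] using hn)
    set b := (ep r x n).2 with hb
    have hep : (ep r x (n + 1)).1 = ⌈(-(b : ℝ)) / r⌉ := rfl
    set v := (-(b : ℝ)) / r with hv
    have hb1 : v ≤ (⌈v⌉ : ℝ) := Int.le_ceil v
    have hb2 : ((⌈v⌉ : ℤ) : ℝ) < v + 1 := Int.ceil_lt_add_one v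
    have hkey : r ^ (n + 1) * v = r ^ n * (-(b : ℝ)) := by
      rw [hpow, hv]; field_simp
    rw [h2, h3, hep, Real.dist_eq, abs_le]
    constructor
    · nlinarith [mul_le_mul_of_nonneg_left hb1 hrn1.le]
    · nlinarith [mul_le_mul_of_nonneg_left hb2.le hrn1.le]

lemma qseq_step (h0 : 0 < r) (h1 : r < 1) (x : ℤ) (n : ℕ) :
    dist (qseq r x n) (qseq r x (n + 1)) ≤ 1 * r ^ n := by
  have hrn : (0 : ℝ) < r ^ n := pow_pos h0 n
  have hrn1 : (0 : ℝ) < r ^ (n + 1) := pow_pos h0 (n + 1)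
  have hpow : r ^ (n + 1) = r ^ n * r := pow_succ r n
  rcases Nat.even_or_odd n with hn | hn
  · have h2 := qseq_even h0 h1 x hn
    have h3 := qseq_odd h0 h1 x (n := n + 1) (by simpa [Nat.even_add_one, Nat.odd_add_one] using hn)
    set b := (ep r x n).2 with hb
    have hep : (ep r x (n + 1)).1 = ⌈(-(b : ℝ)) / r⌉ := rfl
    set v := (-(b : ℝ)) / r with hv
    have hb1 : v ≤ (⌈v⌉ : ℝ) := Int.le_ceil v
    have hb2 : ((⌈v⌉ : ℤ) : ℝ) < v + 1 := Int.ceil_lt_add_one v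
    have hkey : r ^ (n + 1) * v = r ^ n * (-(b : ℝ)) := by
      rw [hpow, hv]; field_simp
    rw [h2, h3, hep, Real.dist_eq, abs_le]
    constructor
    · nlinarith [mul_le_mul_of_nonneg_left hb2.le hrn1.le]
    · nlinarith [mul_le_mul_of_nonneg_left hb1 hrn1.le]
  · have h2 := qseq_odd h0 h1 x hn
    have h3 := qseq_even h0 h1 x (n := n + 1) (by simpa [Nat.even_add_one] using hn)
    set a := (ep r x n).1 with ha
    have hep : (ep r x (n + 1)).2 = ⌈((1 : ℝ) - (a : ℝ)) / r⌉ - 1 := rfl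
    set u := ((1 : ℝ) - (a : ℝ)) / r with hu
    have hb1 : u ≤ (⌈u⌉ : ℝ) := Int.le_ceil u
    have hb2 : ((⌈u⌉ : ℤ) : ℝ) < u + 1 := Int.ceil_lt_add_one u
    have hkey : r ^ (n + 1) * u = r ^ n * (1 - (a : ℝ)) := by
      rw [hpow, hu]; field_simp
    rw [h2, h3, hep, Real.dist_eq, abs_le]
    push_cast
    constructor
    · nlinarith [mul_le_mul_of_nonneg_left (show (⌈u⌉ : ℝ) - 1 ≤ u by linarith) hrn1.le]
    · nlinarith [mul_le_mul_of_nonneg_left (show u - 1 ≤ (⌈u⌉ : ℝ) - 1 by linarith) hrn1.le]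

lemma exists_lim (h1 : r < 1) {f : ℕ → ℝ} (hf : ∀ n, dist (f n) (f (n + 1)) ≤ 1 * r ^ n) :
    ∃ l, Tendsto f atTop (nhds l) ∧ ∀ n, dist (f n) l ≤ 1 * r ^ n / (1 - r) := by
  have hc : CauchySeq f := cauchySeq_of_le_geometric r 1 h1 hf
  obtain ⟨l, hl⟩ := cauchySeq_tendsto_of_complete hc
  exact ⟨l, hl, fun n => dist_le_of_le_geometric_of_tendsto r 1 h1 hf hl n⟩

lemma ep_adj (h0 : 0 < r) (x : ℤ) : ∀ n : ℕ,
    (Even n → (ep r x n).2 + 1 = (ep r (x + 1) n).1) ∧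
    (¬Even n → (ep r (x + 1) n).2 = (ep r x n).1 - 1) := by
  intro n
  induction n with
  | zero =>
    constructor
    · intro _; simp [ep]
    · intro h; simp at h
  | succ n ih =>
    constructor
    · intro he
      have hodd : ¬Even n := by simpa [Nat.even_add_one] using he
      have h2 := ih.2 hodd
      show ⌈((1 : ℝ) - ((ep r x n).1 : ℝ)) / r⌉ - 1 + 1 = ⌈(-(((ep r (x + 1) n).2 : ℤ) : ℝ)) / r⌉
      have hc : (-(((ep r (x + 1) n).2 : ℤ) : ℝ)) = (1 : ℝ) - ((ep r x n).1 : ℝ) := by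
        rw [h2]; push_cast; ring
      rw [hc]; omega
    · intro ho
      have he : Even n := by
        by_contra h
        exact ho (by simpa [Nat.even_add_one] using h)
      have h2 := ih.1 he
      show ⌈((1 : ℝ) - ((ep r (x + 1) n).1 : ℝ)) / r⌉ - 1 = ⌈(-(((ep r x n).2 : ℤ) : ℝ)) / r⌉ - 1
      have hc : ((1 : ℝ) - ((ep r (x + 1) n).1 : ℝ)) = (-(((ep r x n).2 : ℤ) : ℝ)) := by
        rw [← h2]; push_cast; ring
      rw [hc]

lemma pq_adj (h0 : 0 < r) (h1 : r < 1) (x : ℤ) (n : ℕ) :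
    pseq r (x + 1) n = qseq r x n + r ^ n := by
  rcases Nat.even_or_odd n with hn | hn
  · rw [pseq_even h0 h1 _ hn, qseq_even h0 h1 _ hn]
    have h2 := (ep_adj h0 x n).1 hn
    have : ((ep r (x + 1) n).1 : ℝ) = ((ep r x n).2 : ℝ) + 1 := by
      rw [← h2]; push_cast; ring
    rw [this]; ring
  · rw [pseq_odd h0 h1 _ hn, qseq_odd h0 h1 _ hn]
    have h2 := (ep_adj h0 x n).2 (Nat.not_even_iff_odd.mpr hn)
    have : ((ep r (x + 1) n).2 : ℝ) = ((ep r x n).1 : ℝ) - 1 := by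
      rw [h2]; push_cast; ring
    rw [this]; ring

lemma scaled_bounds {c : ℝ} {a b z : ℤ} (hab1 : a ≤ z) (hab2 : z ≤ b) :
    min (c * a) (c * b) ≤ c * z ∧ c * z ≤ max (c * a) (c * b) := by
  have h1' : (a : ℝ) ≤ z := by exact_mod_cast hab1
  have h2' : (z : ℝ) ≤ b := by exact_mod_cast hab2
  rcases le_total 0 c with hc | hc
  · exact ⟨(min_le_left _ _).trans (by nlinarith), le_trans (by nlinarith) (le_max_right _ _)⟩
  · exact ⟨(min_le_right _ _).trans (by nlinarith), le_trans (by nlinarith) (le_max_left _ _)⟩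

lemma tile_eq (h0 : 0 < r) (h1 : r < 1) (x : ℤ) (p q : ℝ)
    (hp : Tendsto (pseq r x) atTop (nhds p))
    (hpd : ∀ n, dist (pseq r x n) p ≤ 1 * r ^ n / (1 - r))
    (hq : Tendsto (qseq r x) atTop (nhds q))
    (hqd : ∀ n, dist (qseq r x n) q ≤ 1 * r ^ n / (1 - r)) :
    tile1 r x = Set.Icc p q := by
  have h1r : (0 : ℝ) < 1 - r := by linarith
  ext t
  constructor
  · rintro ⟨z, hz, hlim⟩
    have hb : ∀ n, pseq r x n ≤ (-r) ^ n * ((z n : ℤ) : ℝ) ∧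
        (-r) ^ n * ((z n : ℤ) : ℝ) ≤ qseq r x n := by
      intro n
      have hmem := (iterate_eq_iff h0 x n (z n)).mp (hz n)
      exact scaled_bounds hmem.1 hmem.2
    exact ⟨le_of_tendsto_of_tendsto' hp hlim (fun n => (hb n).1),
      le_of_tendsto_of_tendsto' hlim hq (fun n => (hb n).2)⟩
  · rintro ⟨htp, htq⟩
    set c : ℕ → ℤ := fun n => ⌊((-1 : ℝ) ^ n * t) / r ^ n⌋ with hcdef
    set z : ℕ → ℤ := fun n => max (ep r x n).1 (min (ep r x n).2 (c n)) with hzdef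
    have hmem : ∀ n, (tau1 r)^[n] (z n) = x := by
      intro n
      apply (iterate_eq_iff h0 x n (z n)).mpr
      have hab := ep_le h0 h1 x n
      exact ⟨le_max_left _ _, max_le hab (min_le_left _ _)⟩
    refine ⟨z, hmem, ?_⟩
    have key : ∀ n, |(-r) ^ n * ((z n : ℤ) : ℝ) - t| ≤ (1 + 1 / (1 - r)) * r ^ n := by
      intro n
      have hab := ep_le h0 h1 x n
      have hrn : (0 : ℝ) < r ^ n := pow_pos h0 n
      have hdp := hpd n
      have hdq := hqd n
      rw [Real.dist_eq, abs_le] at hdp hdq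
      simp only [one_mul] at hdp hdq
      have hK0 : (0 : ℝ) ≤ (1 + 1 / (1 - r)) * r ^ n := by positivity
      have hKa : r ^ n / (1 - r) ≤ (1 + 1 / (1 - r)) * r ^ n := by
        rw [div_eq_mul_one_div]; nlinarith [pow_pos h0 n]
      have hK1 : r ^ n ≤ (1 + 1 / (1 - r)) * r ^ n := by
        nlinarith [one_div_pos.mpr h1r, pow_pos h0 n]
      rcases Nat.even_or_odd n with hn | hn
      · have hneg : (-r) ^ n = r ^ n := hn.neg_pow r
        have hone : ((-1 : ℝ)) ^ n = 1 := hn.neg_one_pow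
        have hcn : c n = ⌊t / r ^ n⌋ := by rw [hcdef]; simp [hone]
        have hpe := pseq_even h0 h1 x hn
        have hqe := qseq_even h0 h1 x hn
        set a := (ep r x n).1 with ha
        set b := (ep r x n).2 with hb
        rcases lt_or_ge (c n) a with hca | hac
        · have hz : z n = a := by
            rw [hzdef]
            simp only
            rw [min_eq_right (by omega : c n ≤ b), max_eq_left hca.le]
          have hflt : t / r ^ n < (a : ℝ) := by
            have := Int.floor_lt.mp (by rw [← hcn]; exact hca)
            exact this
          have htlt : t < r ^ n * a := by
            rw [div_lt_iff₀ hrn] at hflt; linarith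
          rw [hz, hneg, abs_le]
          constructor
          · linarith
          · have h8 : r ^ n * (a : ℝ) ≤ p + r ^ n / (1 - r) := by
              linarith [hdp.2, hpe]
            linarith
        rcases lt_or_ge b (c n) with hbc | hcb
        · have hz : z n = b := by
            rw [hzdef]
            simp only
            rw [min_eq_left hbc.le, max_eq_right hab]
          have hfge : ((b : ℝ) + 1) ≤ t / r ^ n := by
            have h5 : (c n : ℝ) ≤ t / r ^ n := by rw [hcn]; exact Int.floor_le _
            have h6 : ((b : ℝ) + 1) ≤ (c n : ℝ) := by exact_mod_cast hbc
            linarith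
          have htge : r ^ n * ((b : ℝ) + 1) ≤ t := by
            rw [le_div_iff₀ hrn] at hfge; linarith
          rw [hz, hneg, abs_le]
          constructor
          · have h8 : q - r ^ n / (1 - r) ≤ r ^ n * (b : ℝ) := by
              linarith [hdq.1, hqe]
            linarith
          · nlinarith
        · have hz : z n = c n := by
            rw [hzdef]
            simp only
            rw [min_eq_right hcb, max_eq_right hac]
          have h5 : ((c n : ℤ) : ℝ) ≤ t / r ^ n := by rw [hcn]; exact Int.floor_le _
          have h6 : t / r ^ n < (c n : ℝ) + 1 := by rw [hcn]; exact Int.lt_floor_add_one _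
          rw [hz, hneg, abs_le]
          rw [le_div_iff₀ hrn] at h5
          rw [div_lt_iff₀ hrn] at h6
          constructor
          · nlinarith
          · nlinarith
      · have hneg : (-r) ^ n = -(r ^ n) := hn.neg_pow r
        have hone : ((-1 : ℝ)) ^ n = -1 := hn.neg_one_pow
        have hcn : c n = ⌊(-t) / r ^ n⌋ := by rw [hcdef]; simp [hone]
        have hpo := pseq_odd h0 h1 x hn
        have hqo := qseq_odd h0 h1 x hn
        set a := (ep r x n).1 with ha
        set b := (ep r x n).2 with hb
        rcases lt_or_ge (c n) a with hca | hac
        · have hz : z n = a := by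
            rw [hzdef]
            simp only
            rw [min_eq_right (by omega : c n ≤ b), max_eq_left hca.le]
          have hflt : (-t) / r ^ n < (a : ℝ) := by
            exact Int.floor_lt.mp (by rw [← hcn]; exact hca)
          have htgt : -(r ^ n * (a : ℝ)) < t := by
            rw [div_lt_iff₀ hrn] at hflt; linarith
          rw [hz, hneg, abs_le]
          constructor
          · have h8 : q - r ^ n / (1 - r) ≤ -(r ^ n * (a : ℝ)) := by
              linarith [hdq.1, hqo]
            linarith
          · nlinarith
        rcases lt_or_ge b (c n) with hbc | hcb
        · have hz : z n = b := by
            rw [hzdef]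
            simp only
            rw [min_eq_left hbc.le, max_eq_right hab]
          have hfge : ((b : ℝ) + 1) ≤ (-t) / r ^ n := by
            have h5 : (c n : ℝ) ≤ (-t) / r ^ n := by rw [hcn]; exact Int.floor_le _
            have h6 : ((b : ℝ) + 1) ≤ (c n : ℝ) := by exact_mod_cast hbc
            linarith
          have htle : t ≤ -(r ^ n * ((b : ℝ) + 1)) := by
            rw [le_div_iff₀ hrn] at hfge; linarith
          rw [hz, hneg, abs_le]
          constructor
          · nlinarith
          · have h8 : -(r ^ n * (b : ℝ)) ≤ p + r ^ n / (1 - r) := by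
              linarith [hdp.2, hpo]
            linarith
        · have hz : z n = c n := by
            rw [hzdef]
            simp only
            rw [min_eq_right hcb, max_eq_right hac]
          have h5 : ((c n : ℤ) : ℝ) ≤ (-t) / r ^ n := by rw [hcn]; exact Int.floor_le _
          have h6 : (-t) / r ^ n < (c n : ℝ) + 1 := by rw [hcn]; exact Int.lt_floor_add_one _
          rw [hz, hneg, abs_le]
          rw [le_div_iff₀ hrn] at h5
          rw [div_lt_iff₀ hrn] at h6
          constructor
          · nlinarith
          · nlinarith
    have h2 : Tendsto (fun n : ℕ => (1 + 1 / (1 - r)) * r ^ n) atTop (nhds 0) := by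
      have := (tendsto_pow_atTop_nhds_zero_of_lt_one h0.le h1).const_mul (1 + 1 / (1 - r))
      simpa using this
    rw [tendsto_iff_dist_tendsto_zero]
    apply squeeze_zero (fun n => dist_nonneg) (fun n => ?_) h2
    rw [Real.dist_eq]
    exact key n

lemma tau1_anti (h0 : 0 < r) {a b : ℤ} (hab : a ≤ b) : tau1 r b ≤ tau1 r a := by
  unfold tau1
  have : ⌊r * (a : ℝ)⌋ ≤ ⌊r * (b : ℝ)⌋ := by
    apply Int.floor_le_floor
    have : (a : ℝ) ≤ b := by exact_mod_cast hab
    nlinarith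
  omega

lemma part1 (h0 : 0 < r) : ∀ (n : ℕ) (x0 y0 : ℤ), y0 < x0 → ∀ xn yn : ℤ,
    (tau1 r)^[n] xn = x0 → (tau1 r)^[n] yn = y0 →
    (-1 : ℤ) ^ n * yn < (-1 : ℤ) ^ n * xn := by
  intro n
  induction n with
  | zero =>
    intro x0 y0 h xn yn hx hy
    simp only [Function.iterate_zero, id_eq] at hx hy
    subst hx hy
    simpa using h
  | succ n ih =>
    intro x0 y0 h xn yn hx hy
    rw [Function.iterate_succ_apply] at hx hy
    have hstep := ih x0 y0 h (tau1 r xn) (tau1 r yn) hx hy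
    rcases Nat.even_or_odd n with hn | hn
    · have h2 : ((-1 : ℤ)) ^ n = 1 := hn.neg_one_pow
      have h3 : ((-1 : ℤ)) ^ (n + 1) = -1 := by rw [pow_succ, h2]; ring
      rw [h2, one_mul, one_mul] at hstep
      have hlt : xn < yn := by
        by_contra hle
        push_neg at hle
        exact absurd (tau1_anti h0 hle) (by omega)
      rw [h3]; omega
    · have h2 : ((-1 : ℤ)) ^ n = -1 := hn.neg_one_pow
      have h3 : ((-1 : ℤ)) ^ (n + 1) = 1 := by rw [pow_succ, h2]; ring
      rw [h2] at hstep
      have hstep' : tau1 r xn < tau1 r yn := by omega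
      have hlt : yn < xn := by
        by_contra hle
        push_neg at hle
        exact absurd (tau1_anti h0 hle) (by omega)
      rw [h3]; omega

end Tile1Aux

/-- for 0 < r < 1, preimages preserve the order up to sign:
x₀ > y₀ implies (-1)^n xₙ > (-1)^n yₙ for all xₙ ∈ τ_r^{-n}(x₀), yₙ ∈ τ_r^{-n}(y₀);
consequently distinct tiles meet in at most one point and the tiles form a tiling
of ℝ by (possibly degenerate) intervals. -/
theorem tile1_tiling (r : ℝ) (h0 : 0 < r) (h1 : r < 1) :
    (∀ x0 y0 : ℤ, y0 < x0 → ∀ (n : ℕ) (xn yn : ℤ),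
      (tau1 r)^[n] xn = x0 → (tau1 r)^[n] yn = y0 →
        (-1 : ℤ) ^ n * yn < (-1 : ℤ) ^ n * xn) ∧
    (∀ x y : ℤ, x ≠ y → (tile1 r x ∩ tile1 r y).Subsingleton) ∧
    (⋃ x : ℤ, tile1 r x) = Set.univ ∧
    (∀ x : ℤ, ∃ p q : ℝ, p ≤ q ∧ tile1 r x = Set.Icc p q) := by
  classical
  have h1r : (0 : ℝ) < 1 - r := by linarith
  have EP := fun x : ℤ => Tile1Aux.exists_lim h1 (Tile1Aux.pseq_step h0 h1 x)
  choose p hp hpd using EP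
  have EQ := fun x : ℤ => Tile1Aux.exists_lim h1 (Tile1Aux.qseq_step h0 h1 x)
  choose q hq hqd using EQ
  have htile : ∀ x, tile1 r x = Set.Icc (p x) (q x) := fun x =>
    Tile1Aux.tile_eq h0 h1 x (p x) (q x) (hp x) (hpd x) (hq x) (hqd x)
  have hpq : ∀ x, p x ≤ q x := fun x =>
    le_of_tendsto_of_tendsto' (hp x) (hq x) (fun n => min_le_max)
  have hqp : ∀ x, q x = p (x + 1) := by
    intro x
    have hshift : ∀ n, Tile1Aux.pseq r (x + 1) n = Tile1Aux.qseq r x n + r ^ n :=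
      Tile1Aux.pq_adj h0 h1 x
    have hten : Tendsto (Tile1Aux.pseq r (x + 1)) atTop (nhds (q x + 0)) := by
      have h2 : Tendsto (fun n : ℕ => Tile1Aux.qseq r x n + r ^ n) atTop (nhds (q x + 0)) :=
        (hq x).add (tendsto_pow_atTop_nhds_zero_of_lt_one h0.le h1)
      exact h2.congr (fun n => (hshift n).symm)
    have := tendsto_nhds_unique hten (hp (x + 1))
    simpa using this
  have hmono : ∀ x y : ℤ, x ≤ y → p x ≤ p y := by
    intro x y hxy
    refine Int.le_induction (motive := fun y _ => p x ≤ p y) le_rfl (fun m _ ihm => le_trans ihm ?_) y hxy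
    exact (hqp m) ▸ hpq m
  have hp0 : ∀ x : ℤ, Tile1Aux.pseq r x 0 = (x : ℝ) := by
    intro x
    simp [Tile1Aux.pseq, Tile1Aux.ep]
  have hpnear : ∀ x : ℤ, |(x : ℝ) - p x| ≤ 1 / (1 - r) := by
    intro x
    have := hpd x 0
    rw [hp0 x] at this
    simpa [Real.dist_eq] using this
  refine ⟨fun x0 y0 h n xn yn hx hy => Tile1Aux.part1 h0 n x0 y0 h xn yn hx hy, ?_, ?_,
    fun x => ⟨p x, q x, hpq x, htile x⟩⟩
  · intro x y hxy
    have main : ∀ u v : ℤ, u < v → (tile1 r u ∩ tile1 r v).Subsingleton := by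
      intro u v huv s hs t ht
      rw [Set.mem_inter_iff, htile u, htile v] at hs ht
      have hle : q u ≤ p v := (hqp u) ▸ hmono (u + 1) v (by omega)
      obtain ⟨⟨_, hsu⟩, ⟨hsv, _⟩⟩ := hs
      obtain ⟨⟨_, htu⟩, ⟨htv, _⟩⟩ := ht
      linarith
    rcases hxy.lt_or_gt with h | h
    · exact main x y h
    · rw [Set.inter_comm]; exact main y x h
  · rw [Set.iUnion_eq_univ_iff]
    intro t
    have hplow : ∀ x : ℤ, (x : ℝ) - 1 / (1 - r) ≤ p x := by
      intro x; have := abs_le.mp (hpnear x); linarith [this.2]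
    have hphigh : ∀ x : ℤ, p x ≤ (x : ℝ) + 1 / (1 - r) := by
      intro x; have := abs_le.mp (hpnear x); linarith [this.1]
    have ha : p ⌊t - 1 / (1 - r)⌋ ≤ t := by
      refine le_trans (hphigh _) ?_
      have := Int.floor_le (t - 1 / (1 - r))
      linarith
    have hb : t < p (⌈t + 1 / (1 - r)⌉ + 1) := by
      refine lt_of_lt_of_le ?_ (hplow _)
      have := Int.le_ceil (t + 1 / (1 - r))
      push_cast
      linarith
    have hex : ∃ x : ℤ, p x ≤ t ∧ t < p (x + 1) := by
      by_contra hcon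
      push_neg at hcon
      have hall : ∀ x : ℤ, ⌊t - 1 / (1 - r)⌋ ≤ x → p x ≤ t :=
        fun x hx => Int.le_induction ha (fun m _ ihm => hcon m ihm) x hx
      have hab2 : (⌊t - 1 / (1 - r)⌋ : ℤ) ≤ ⌈t + 1 / (1 - r)⌉ + 1 := by
        have h5 := Int.floor_le (t - 1 / (1 - r))
        have h6 := Int.le_ceil (t + 1 / (1 - r))
        have hc : (0 : ℝ) < 1 / (1 - r) := by positivity
        have : ((⌊t - 1 / (1 - r)⌋ : ℤ) : ℝ) ≤ ((⌈t + 1 / (1 - r)⌉ + 1 : ℤ) : ℝ) := by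
          push_cast
          linarith
        exact_mod_cast this
      exact absurd (hall _ hab2) (not_le.mpr hb)
    obtain ⟨x, hx1, hx2⟩ := hex
    refine ⟨x, ?_⟩
    rw [htile x]
    exact ⟨hx1, le_of_lt ((hqp x) ▸ hx2)⟩
end
end

section
/- Let β > 1 be an algebraic integer with minimal polynomial x^{d+1} + a_d x^d + ... + a_0 = (x - β)(x^d + r_{d-1}x^{d-1} + ... + r_0), and set r = (r_0,...,r_{d-1}). Then for all z ∈ ℤ^d and all n ∈ ℕ, {r·τ_r^n(z)} = T_β^n({r·z}), where T_β(x) = {βx} is the beta-transformation on [0,1). In particular, the restriction of T_β to ℤ[β] ∩ [0,1) is conjugate to τ_r via the bijection z ↦ {r·z}. -/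
open Matrix Filter

noncomputable section

/-! ### Auxiliary material for the proof -/

lemma srsDot_single {d : ℕ} (r : Fin d → ℝ) (j : Fin d) (c : ℤ) :
    srsDot r (Pi.single j c) = r j * c := by
  unfold srsDot
  rw [Finset.sum_eq_single j]
  · simp
  · intro i _ hne
    simp [Pi.single_eq_of_ne hne]
  · simp

/-- The additive subgroup ℤ·r₀ + ⋯ + ℤ·r_{d-1} + ℤ of ℝ. -/
def srsSpan {d : ℕ} (r : Fin d → ℝ) : AddSubgroup ℝ where
  carrier := {x | ∃ w : Fin d → ℤ, ∃ m : ℤ, x = srsDot r w + m}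
  zero_mem' := ⟨0, 0, by simp [srsDot]⟩
  add_mem' := by
    rintro x y ⟨w, m, rfl⟩ ⟨w', m', rfl⟩
    refine ⟨w + w', m + m', ?_⟩
    have h : srsDot r (w + w') = srsDot r w + srsDot r w' := by
      unfold srsDot
      rw [← Finset.sum_add_distrib]
      refine Finset.sum_congr rfl fun i _ => ?_
      push_cast [Pi.add_apply]
      ring
    rw [h]
    push_cast
    ring
  neg_mem' := by
    rintro x ⟨w, m, rfl⟩
    refine ⟨-w, -m, ?_⟩
    have h : srsDot r (-w) = -srsDot r w := by
      unfold srsDot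
      rw [← Finset.sum_neg_distrib]
      refine Finset.sum_congr rfl fun i _ => ?_
      push_cast [Pi.neg_apply]
      ring
    rw [h]
    push_cast
    ring

lemma srsSpan_mem_iff {d : ℕ} (r : Fin d → ℝ) (x : ℝ) :
    x ∈ srsSpan r ↔ ∃ w : Fin d → ℤ, ∃ m : ℤ, x = srsDot r w + m := Iff.rfl

/-- The polynomial expressing `r (E - n)` in terms of powers of β. -/
def srsG (a : ℕ → ℤ) (E n : ℕ) : Polynomial ℤ :=
  Polynomial.X ^ (n+1) + ∑ t ∈ Finset.range (n+1), Polynomial.C (a (E + 1 - t)) * Polynomial.X ^ (n - t)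

lemma srsG_rec (a : ℕ → ℤ) (E n : ℕ) :
    srsG a E (n+1) = Polynomial.X * srsG a E n + Polynomial.C (a (E - n)) := by
  unfold srsG
  rw [Finset.sum_range_succ, mul_add, Finset.mul_sum]
  have h1 : ∀ t ∈ Finset.range (n+1),
      Polynomial.C (a (E+1-t)) * Polynomial.X ^ (n+1-t)
        = Polynomial.X * (Polynomial.C (a (E+1-t)) * Polynomial.X ^ (n-t)) := by
    intro t ht
    rw [Finset.mem_range] at ht
    rw [show n+1-t = (n-t)+1 by omega, pow_succ]
    ring
  rw [Finset.sum_congr rfl h1, show E + 1 - (n+1) = E - n by omega,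
    show n + 1 - (n+1) = 0 by omega]
  ring

lemma srsG_sum_deg (a : ℕ → ℤ) (E n : ℕ) :
    (∑ t ∈ Finset.range (n+1), Polynomial.C (a (E + 1 - t)) * Polynomial.X ^ (n - t)).degree
      < ((n+1 : ℕ) : WithBot ℕ) := by
  apply lt_of_le_of_lt (Polynomial.degree_sum_le _ _)
  rw [Finset.sup_lt_iff (by exact_mod_cast WithBot.bot_lt_coe _)]
  intro t _
  apply lt_of_le_of_lt (Polynomial.degree_C_mul_X_pow_le _ _)
  exact_mod_cast Nat.lt_succ_of_le (Nat.sub_le n t)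

lemma srsG_monic (a : ℕ → ℤ) (E n : ℕ) : (srsG a E n).Monic :=
  Polynomial.monic_X_pow_add (srsG_sum_deg a E n)

lemma srsG_natDegree (a : ℕ → ℤ) (E n : ℕ) : (srsG a E n).natDegree = n + 1 := by
  have h1 : (srsG a E n).degree = ((n+1 : ℕ) : WithBot ℕ) := by
    unfold srsG
    rw [Polynomial.degree_add_eq_left_of_degree_lt, Polynomial.degree_X_pow]
    rw [Polynomial.degree_X_pow]
    exact srsG_sum_deg a E n
  exact Polynomial.natDegree_eq_of_degree_eq_some h1

lemma srsG_coeff_top (a : ℕ → ℤ) (E n : ℕ) : (srsG a E n).coeff (n+1) = 1 := by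
  have := (srsG_monic a E n).coeff_natDegree
  rwa [srsG_natDegree] at this

lemma srsG_aeval (a : ℕ → ℤ) (E n : ℕ) (β : ℝ) :
    Polynomial.aeval β (srsG a E n)
      = β^(n+1) + ∑ t ∈ Finset.range (n+1), (a (E+1-t) : ℝ) * β^(n-t) := by
  unfold srsG
  simp [map_sum]

/-- if β > 1 is an algebraic integer with minimal polynomial
(x-β)(x^d + r_{d-1}x^{d-1} + ⋯ + r_0), then {r·τ_r^n(z)} = T_β^n({r·z}) for all
z ∈ ℤ^d and n; in particular z ↦ {r·z} is a bijection from ℤ^d onto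
ℤ[β] ∩ [0,1), conjugating τ_r with the β-transformation. -/
theorem srs_beta_conjugacy (d : ℕ) (hd : 0 < d) (β : ℝ) (hβ : 1 < β)
    (hint : IsIntegral ℤ β) (r : Fin d → ℝ)
    (hdeg : (minpoly ℤ β).natDegree = d + 1)
    (hfact : (minpoly ℤ β).map (Int.castRingHom ℝ) =
      (Polynomial.X - Polynomial.C β) *
        (Polynomial.X ^ d + ∑ i : Fin d, Polynomial.C (r i) * Polynomial.X ^ (i : ℕ))) :
    (∀ (z : Fin d → ℤ) (n : ℕ),
      Int.fract (srsDot r ((srsTau r)^[n] z)) =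
        (fun x : ℝ => Int.fract (β * x))^[n] (Int.fract (srsDot r z))) ∧
    Set.BijOn (fun z : Fin d → ℤ => Int.fract (srsDot r z)) Set.univ
      {x : ℝ | x ∈ Algebra.adjoin ℤ ({β} : Set ℝ) ∧ x ∈ Set.Ico (0:ℝ) 1} := by
  obtain ⟨e, rfl⟩ : ∃ e, d = e + 1 := ⟨d - 1, (Nat.succ_pred_eq_of_pos hd).symm⟩
  set p := minpoly ℤ β with hp
  set q : Polynomial ℝ :=
    Polynomial.X ^ (e+1) + ∑ i : Fin (e+1), Polynomial.C (r i) * Polynomial.X ^ (i : ℕ) with hqdef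
  set a : ℕ → ℤ := fun k => p.coeff k with ha
  -- coefficients of q
  have hsum : ∀ j : ℕ, (∑ i : Fin (e+1), Polynomial.C (r i) * Polynomial.X ^ (i:ℕ)).coeff j
      = if hj : j < e + 1 then r ⟨j, hj⟩ else 0 := by
    intro j
    rw [Polynomial.finset_sum_coeff]
    by_cases hj : j < e + 1
    · rw [dif_pos hj]
      have h1 : ∀ i : Fin (e+1), (Polynomial.C (r i) * Polynomial.X ^ (i:ℕ)).coeff j
          = if (⟨j, hj⟩ : Fin (e+1)) = i then r i else 0 := by
        intro i
        rw [Polynomial.coeff_C_mul, Polynomial.coeff_X_pow, mul_ite, mul_one, mul_zero]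
        congr 1
        simp [Fin.ext_iff, eq_comm]
      rw [Finset.sum_congr rfl fun i _ => h1 i, Finset.sum_ite_eq, if_pos (Finset.mem_univ _)]
    · rw [dif_neg hj]
      refine Finset.sum_eq_zero fun i _ => ?_
      rw [Polynomial.coeff_C_mul, Polynomial.coeff_X_pow, if_neg (by omega), mul_zero]
  have hq_lt : ∀ (j : ℕ) (hj : j < e + 1), q.coeff j = r ⟨j, hj⟩ := by
    intro j hj
    rw [hqdef, Polynomial.coeff_add, Polynomial.coeff_X_pow, if_neg (by omega), hsum,
      dif_pos hj, zero_add]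
  have hq_top : q.coeff (e+1) = 1 := by
    rw [hqdef, Polynomial.coeff_add, Polynomial.coeff_X_pow, if_pos rfl, hsum,
      dif_neg (by omega), add_zero]
  have hcoe : ∀ k : ℕ, ((a k : ℝ)) = (Polynomial.X * q).coeff k - β * q.coeff k := by
    intro k
    have h1 := congrArg (fun P => Polynomial.coeff P k) hfact
    rw [Polynomial.coeff_map] at h1
    rw [sub_mul, Polynomial.coeff_sub, Polynomial.coeff_C_mul] at h1
    exact_mod_cast h1
  have hq0 : ((a 0 : ℝ)) = -(β * r 0) := by
    have := hcoe 0
    rw [Polynomial.mul_coeff_zero, Polynomial.coeff_X_zero, zero_mul, hq_lt 0 (by omega),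
      zero_sub] at this
    rw [this]
    norm_num
  have hmid : ∀ i : Fin e, ((a ((i:ℕ)+1) : ℝ)) = r i.castSucc - β * r i.succ := by
    intro i
    have := hcoe ((i:ℕ)+1)
    rw [Polynomial.coeff_X_mul, hq_lt (i:ℕ) (by omega), hq_lt ((i:ℕ)+1) (by omega)] at this
    rw [this]
    congr 1
  have htop : ((a (e+1) : ℝ)) = r (Fin.last e) - β := by
    have := hcoe (e+1)
    rw [Polynomial.coeff_X_mul, hq_lt e (by omega), hq_top, mul_one] at this
    rw [this]
    congr 1
  -- the key dynamical identity
  have key : ∀ z : Fin (e+1) → ℤ, ∃ m : ℤ,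
      β * Int.fract (srsDot r z) = srsDot r (srsTau r z) + m := by
    intro z
    refine ⟨-(a 0) * z 0 - (∑ i : Fin e, a ((i:ℕ)+1) * z i.succ)
      + a (e+1) * ⌊srsDot r z⌋, ?_⟩
    have t0 : β * (r 0 * ((z 0 : ℤ) : ℝ)) = -((a 0 : ℝ)) * (z 0 : ℝ) := by rw [hq0]; ring
    have ti : ∀ i : Fin e, β * (r i.succ * ((z i.succ : ℤ) : ℝ))
        = r i.castSucc * (z i.succ : ℝ) - ((a ((i:ℕ)+1) : ℝ)) * (z i.succ : ℝ) := by
      intro i; rw [hmid i]; ring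
    have h1 : β * srsDot r z
        = (∑ i : Fin e, r i.castSucc * (z i.succ : ℝ))
          + (-((a 0 : ℝ)) * (z 0 : ℝ) - ∑ i : Fin e, ((a ((i:ℕ)+1) : ℝ)) * (z i.succ : ℝ)) := by
      rw [srsDot, Finset.mul_sum, Fin.sum_univ_succ]
      rw [t0, Finset.sum_congr rfl fun i _ => ti i, Finset.sum_sub_distrib]
      ring
    have h2 : srsDot r (srsTau r z)
        = (∑ i : Fin e, r i.castSucc * (z i.succ : ℝ)) - r (Fin.last e) * (⌊srsDot r z⌋ : ℝ) := by
      rw [show srsDot r (srsTau r z) = ∑ i, r i * ((srsTau r z i : ℤ) : ℝ) from rfl]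
      rw [Fin.sum_univ_castSucc]
      congr 1
      · refine Finset.sum_congr rfl fun i _ => ?_
        rw [show srsTau r z i.castSucc = z i.succ from ?_]
        · unfold srsTau
          rw [dif_pos (by simp [Nat.succ_lt_succ i.isLt])]
          exact congrArg z (Fin.ext rfl)
      · unfold srsTau
        rw [dif_neg (by simp)]
        push_cast
        ring
    have hfl : Int.fract (srsDot r z) = srsDot r z - ⌊srsDot r z⌋ := rfl
    have hb : β = r (Fin.last e) - ((a (e+1) : ℝ)) := by rw [htop]; ring
    rw [hfl, mul_sub, h1, h2, hb]
    push_cast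
    ring
  have step : ∀ z : Fin (e+1) → ℤ,
      Int.fract (srsDot r (srsTau r z)) = Int.fract (β * Int.fract (srsDot r z)) := by
    intro z
    obtain ⟨m, hm⟩ := key z
    rw [hm, Int.fract_add_intCast]
  have conj : ∀ (z : Fin (e+1) → ℤ) (n : ℕ),
      Int.fract (srsDot r ((srsTau r)^[n] z)) =
        (fun x : ℝ => Int.fract (β * x))^[n] (Int.fract (srsDot r z)) := by
    intro z n
    induction n with
    | zero => rfl
    | succ n ih =>
      rw [Function.iterate_succ_apply', Function.iterate_succ_apply', step, ih]
  -- the polynomials expressing r in terms of β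
  have hg_eval : ∀ n, n ≤ e → ∀ j : Fin (e+1), (j:ℕ) = e - n →
      Polynomial.aeval β (srsG a e n) = r j := by
    intro n
    induction n with
    | zero =>
      intro _ j hj
      have hjl : j = Fin.last e := Fin.ext (by simpa using hj)
      rw [srsG_aeval, Finset.sum_range_one, hjl]
      simp only [pow_one, Nat.sub_zero, pow_zero, mul_one, Nat.add_sub_cancel]
      rw [htop]
      ring
    | succ n ih =>
      intro hn j hj
      have hn' : n ≤ e := by omega
      rw [srsG_rec, map_add, _root_.map_mul, Polynomial.aeval_X, Polynomial.aeval_C,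
        ih hn' ⟨e - n, by omega⟩ rfl]
      have hie : e - n - 1 < e := by omega
      set i : Fin e := ⟨e - n - 1, hie⟩ with hidef
      have h1 : r (⟨e - n, by omega⟩ : Fin (e+1)) = r i.succ :=
        congrArg r (Fin.ext (by simp [hidef]; omega))
      have h2 : r j = r i.castSucc := congrArg r (Fin.ext (by simp [hidef]; omega))
      have h3 := hmid i
      have h4 : (i:ℕ) + 1 = e - n := by simp [hidef]; omega
      rw [h4] at h3
      rw [h1, h2, show (algebraMap ℤ ℝ) (a (e - n)) = ((a (e-n)) : ℝ) by simp]
      linarith [h3]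
  -- linear independence
  have indep : ∀ (w : Fin (e+1) → ℤ) (m : ℤ), srsDot r w + m = 0 → w = 0 := by
    intro w m hw
    by_contra hne
    have hexists : (Finset.univ.filter (fun j : Fin (e+1) => w j ≠ 0)).Nonempty := by
      rw [Finset.filter_nonempty_iff]
      simp only [Finset.mem_univ, true_and]
      exact Function.ne_iff.mp hne
    obtain ⟨j0, hj0mem, hj0min⟩ :=
      Finset.exists_min_image _ (fun j : Fin (e+1) => (j:ℕ)) hexists
    rw [Finset.mem_filter] at hj0mem
    have hwj0 : w j0 ≠ 0 := hj0mem.2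
    set F : Polynomial ℤ :=
      (∑ j : Fin (e+1), Polynomial.C (w j) * srsG a e (e - (j:ℕ))) + Polynomial.C m with hF
    have haeF : Polynomial.aeval β F = 0 := by
      rw [hF, map_add, map_sum, Polynomial.aeval_C]
      have h5 : ∀ j : Fin (e+1),
          Polynomial.aeval β (Polynomial.C (w j) * srsG a e (e - (j:ℕ))) = r j * (w j : ℝ) := by
        intro j
        rw [_root_.map_mul, Polynomial.aeval_C, hg_eval (e - (j:ℕ)) (by omega) j (by omega)]
        simp [mul_comm]
      rw [Finset.sum_congr rfl fun j _ => h5 j,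
        show (∑ j : Fin (e+1), r j * (w j : ℝ)) = srsDot r w from rfl,
        show (algebraMap ℤ ℝ) m = ((m : ℤ) : ℝ) by simp]
      exact hw
    have hF0 : F = 0 := by
      by_contra hFne
      have hdvd := minpoly.isIntegrallyClosed_dvd hint haeF
      have hle := Polynomial.natDegree_le_of_dvd hdvd hFne
      rw [← hp, hdeg] at hle
      have hFdeg : F.natDegree ≤ e + 1 := by
        rw [hF]
        apply le_trans (Polynomial.natDegree_add_le _ _)
        rw [max_le_iff]
        constructor
        · apply Polynomial.natDegree_sum_le_of_forall_le
          intro j _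
          apply le_trans (Polynomial.natDegree_C_mul_le _ _)
          rw [srsG_natDegree]
          omega
        · rw [Polynomial.natDegree_C]; omega
      omega
    have hcoeff : F.coeff (e + 1 - (j0:ℕ)) = w j0 := by
      rw [hF, Polynomial.coeff_add, Polynomial.finset_sum_coeff, Polynomial.coeff_C,
        if_neg (by omega), add_zero]
      rw [Finset.sum_eq_single j0]
      · rw [Polynomial.coeff_C_mul, show e + 1 - (j0:ℕ) = (e - (j0:ℕ)) + 1 by omega,
          srsG_coeff_top, mul_one]
      · intro j _ hne'
        rw [Polynomial.coeff_C_mul]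
        by_cases hw' : w j = 0
        · rw [hw', zero_mul]
        · have hge : (j0:ℕ) ≤ (j:ℕ) :=
            hj0min j (Finset.mem_filter.mpr ⟨Finset.mem_univ _, hw'⟩)
          have hlt : (j0:ℕ) < (j:ℕ) := lt_of_le_of_ne hge (fun h => hne' (Fin.ext h.symm))
          rw [Polynomial.coeff_eq_zero_of_natDegree_lt, mul_zero]
          rw [srsG_natDegree]
          omega
      · intro h; exact absurd (Finset.mem_univ _) h
    rw [hF0, Polynomial.coeff_zero] at hcoeff
    exact hwj0 hcoeff.symm
  -- r j lies in ℤ[β]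
  have hr_adj : ∀ j : Fin (e+1), r j ∈ Algebra.adjoin ℤ ({β} : Set ℝ) := by
    intro j
    rw [Algebra.adjoin_singleton_eq_range_aeval]
    exact ⟨srsG a e (e - (j:ℕ)), hg_eval (e - (j:ℕ)) (by omega) j (by omega)⟩
  -- powers of β lie in the span
  have hpow : ∀ k, k ≤ e + 1 → β ^ k ∈ srsSpan r := by
    intro k
    induction k using Nat.strong_induction_on with
    | _ k ih =>
      intro hk
      match k with
      | 0 => exact (srsSpan_mem_iff r _).mpr ⟨0, 1, by simp [srsDot]⟩
      | n+1 =>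
        have hn : n ≤ e := by omega
        have hev := srsG_aeval a e n β
        rw [hg_eval n hn ⟨e - n, by omega⟩ rfl] at hev
        have hβn : β ^ (n+1) = r ⟨e - n, by omega⟩
            - ∑ t ∈ Finset.range (n+1), (a (e+1-t) : ℝ) * β^(n-t) := by
          linarith [hev]
        rw [hβn]
        apply AddSubgroup.sub_mem
        · exact (srsSpan_mem_iff r _).mpr
            ⟨Pi.single ⟨e - n, by omega⟩ 1, 0, by rw [srsDot_single]; push_cast; ring⟩
        · apply AddSubgroup.sum_mem
          intro t ht
          rw [Finset.mem_range] at ht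
          have h1 := ih (n - t) (by omega) (by omega)
          have h2 := (srsSpan r).zsmul_mem h1 (a (e+1-t))
          simpa [zsmul_eq_mul] using h2
  -- everything in ℤ[β] lies in the span
  have hspan : ∀ x ∈ Algebra.adjoin ℤ ({β} : Set ℝ),
      ∃ (w : Fin (e+1) → ℤ) (m : ℤ), x = srsDot r w + m := by
    intro x hx
    rw [Algebra.adjoin_singleton_eq_range_aeval] at hx
    obtain ⟨f, hf⟩ := hx
    have hfx : Polynomial.aeval β f = x := hf
    have hmonic : p.Monic := minpoly.monic hint
    have hmod : Polynomial.aeval β f = Polynomial.aeval β (f %ₘ p) := by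
      conv_lhs => rw [← Polynomial.modByMonic_add_div f p]
      simp [hp, minpoly.aeval]
    have hdegm : (f %ₘ p).natDegree < e + 2 := by
      have h1 := Polynomial.degree_modByMonic_lt f hmonic
      have h2 : (f %ₘ p).degree < ((e+2 : ℕ) : WithBot ℕ) := by
        apply lt_of_lt_of_le h1
        rw [Polynomial.degree_eq_natDegree (minpoly.ne_zero hint), ← hp, hdeg]
      by_cases h0 : f %ₘ p = 0
      · rw [h0]; simp
      · exact (Polynomial.natDegree_lt_iff_degree_lt h0).mpr h2
    have hxval : x = ∑ i ∈ Finset.range (e+2), (f %ₘ p).coeff i • β ^ i := by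
      rw [← Polynomial.aeval_eq_sum_range' hdegm β, ← hmod, hfx]
    have hmem : x ∈ srsSpan r := by
      rw [hxval]
      apply AddSubgroup.sum_mem
      intro k hk
      rw [Finset.mem_range] at hk
      exact (srsSpan r).zsmul_mem (hpow k (by omega)) _
    exact (srsSpan_mem_iff r x).mp hmem
  refine ⟨conj, ?_, ?_, ?_⟩
  · -- MapsTo
    intro z _
    constructor
    · have hdotmem : srsDot r z ∈ Algebra.adjoin ℤ ({β} : Set ℝ) := by
        unfold srsDot
        exact Subalgebra.sum_mem _ fun i _ =>
          mul_mem (hr_adj i) (intCast_mem (Algebra.adjoin ℤ ({β} : Set ℝ)) (z i))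
      show Int.fract (srsDot r z) ∈ Algebra.adjoin ℤ ({β} : Set ℝ)
      have hfr : Int.fract (srsDot r z) = srsDot r z - (⌊srsDot r z⌋ : ℝ) := rfl
      rw [hfr]
      exact sub_mem hdotmem (intCast_mem _ _)
    · exact ⟨Int.fract_nonneg _, Int.fract_lt_one _⟩
  · -- InjOn
    intro z _ z' _ h
    obtain ⟨k, hk⟩ := Int.fract_eq_fract.mp h
    have hsub : srsDot r (z - z') = srsDot r z - srsDot r z' := by
      unfold srsDot
      rw [← Finset.sum_sub_distrib]
      refine Finset.sum_congr rfl fun i _ => ?_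
      push_cast [Pi.sub_apply]
      ring
    have h0 : srsDot r (z - z') + ((-k : ℤ) : ℝ) = 0 := by
      rw [hsub]
      push_cast
      linarith [hk]
    have := indep (z - z') (-k) h0
    exact sub_eq_zero.mp this
  · -- SurjOn
    intro x hx
    obtain ⟨hadj, hico⟩ := hx
    obtain ⟨w, m, hwm⟩ := hspan x hadj
    refine ⟨w, Set.mem_univ _, ?_⟩
    show Int.fract (srsDot r w) = x
    have h1 : srsDot r w = x + ((-m : ℤ) : ℝ) := by push_cast; linarith [hwm]
    rw [h1, Int.fract_add_intCast]
    exact Int.fract_eq_self.mpr ⟨hico.1, hico.2⟩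

end
end

section
/- Every element P of ℤ[x]/Aℤ[x] has one and only one (A,N)-representation: there is a unique sequence (b_n)_{n∈ℕ} with b_n ∈ N = {0,...,a_0 - 1} such that P - Σ_{n=0}^{m-1} b_n X^n ∈ X^m·(ℤ[x]/Aℤ[x]) for all m ∈ ℕ. -/
noncomputable section

open Polynomial

/-- Backward division iteration. -/
noncomputable def digSeq (A p : Polynomial ℤ) : ℕ → Polynomial ℤ
  | 0 => p
  | n + 1 => (digSeq A p n - C ((digSeq A p n).coeff 0 % A.coeff 0)
      - C ((digSeq A p n).coeff 0 / A.coeff 0) * A).divX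

lemma digSeq_step (A p : Polynomial ℤ) (n : ℕ) :
    digSeq A p n = X * digSeq A p (n + 1) + C ((digSeq A p n).coeff 0 % A.coeff 0)
      + C ((digSeq A p n).coeff 0 / A.coeff 0) * A := by
  set q := digSeq A p n with hq
  set r := q - C (q.coeff 0 % A.coeff 0) - C (q.coeff 0 / A.coeff 0) * A with hr
  have h0 : r.coeff 0 = 0 := by
    have h := Int.emod_add_mul_ediv (q.coeff 0) (A.coeff 0)
    simp only [hr, coeff_sub, mul_coeff_zero, coeff_C_zero]
    linarith [mul_comm (A.coeff 0) (q.coeff 0 / A.coeff 0)]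
  have h1 : X * r.divX = r := by
    conv_rhs => rw [← X_mul_divX_add r]
    rw [h0, map_zero, add_zero]
  have h2 : digSeq A p (n + 1) = r.divX := rfl
  rw [h2, h1, hr]; ring

/-- Existence: telescoping identity on polynomial representatives. -/
lemma digSeq_telescope (A p : Polynomial ℤ) (m : ℕ) :
    ∃ s : Polynomial ℤ, p - ∑ n ∈ Finset.range m,
        C ((digSeq A p n).coeff 0 % A.coeff 0) * X ^ n
      = X ^ m * digSeq A p m + s * A := by
  induction m with
  | zero => exact ⟨0, by simp [digSeq]⟩
  | succ m ih =>
    obtain ⟨s, hs⟩ := ih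
    have hstep := digSeq_step A p m
    refine ⟨s + X ^ m * C ((digSeq A p m).coeff 0 / A.coeff 0), ?_⟩
    rw [Finset.sum_range_succ, sub_add_eq_sub_sub, hs]
    linear_combination (X ^ m : Polynomial ℤ) * hstep

/-- Key uniqueness lemma: if d·Xᵐ ∈ (X^(m+1), A) then a₀ ∣ d. -/
lemma key_dvd (A : Polynomial ℤ) (ha0 : 2 ≤ A.coeff 0) (d : ℤ) :
    ∀ (m : ℕ) (r s : Polynomial ℤ),
      C d * X ^ m = X ^ (m + 1) * r + s * A → A.coeff 0 ∣ d := by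
  intro m
  induction m with
  | zero =>
    intro r s h
    have h0 := congrArg (fun q => Polynomial.coeff q 0) h
    simp only [mul_coeff_zero, coeff_C_zero, pow_zero, coeff_one_zero, mul_one,
      coeff_add, zero_add, pow_one, coeff_X_zero, zero_mul] at h0
    exact ⟨s.coeff 0, by linarith [h0, mul_comm (s.coeff 0) (A.coeff 0)]⟩
  | succ m ih =>
    intro r s h
    have h0 := congrArg (fun q => Polynomial.coeff q 0) h
    simp only [mul_coeff_zero, coeff_C_zero, coeff_add, coeff_X_pow] at h0
    rw [if_neg (by omega : ¬(0 = m + 1)), if_neg (by omega : ¬(0 = m + 1 + 1))] at h0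
    have hs0 : s.coeff 0 = 0 := by
      have ha : s.coeff 0 * A.coeff 0 = 0 := by linarith
      rcases mul_eq_zero.mp ha with h' | h'
      · exact h'
      · omega
    have hs' : X * s.divX = s := by
      conv_rhs => rw [← X_mul_divX_add s]
      rw [hs0, map_zero, add_zero]
    have hX : X * (C d * X ^ m) = X * (X ^ (m + 1) * r + s.divX * A) := by
      linear_combination h - A * hs'
    exact ih r s.divX (mul_left_cancel₀ X_ne_zero hX)

set_option maxHeartbeats 1000000

/-- every element of ℤ[x]/Aℤ[x] has a unique (A,N)-representation,
N = {0,…,a_0-1}: a unique digit sequence (b_n) with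
P - Σ_{n<m} b_n X^n ∈ X^m·(ℤ[x]/Aℤ[x]) for all m. -/
theorem AN_representation_exists_unique (A : Polynomial ℤ)
    (hd : 0 < A.natDegree) (ha0 : 2 ≤ A.coeff 0)
    (had : A.coeff A.natDegree ≠ 0)
    (P : Polynomial ℤ ⧸ Ideal.span {A}) :
    ∃! b : ℕ → ℤ, (∀ n, 0 ≤ b n ∧ b n < A.coeff 0) ∧
      ∀ m : ℕ, ∃ Q : Polynomial ℤ ⧸ Ideal.span {A},
        P - ∑ n ∈ Finset.range m,
            b n • (Ideal.Quotient.mk (Ideal.span {A}) Polynomial.X) ^ n =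
          (Ideal.Quotient.mk (Ideal.span {A}) Polynomial.X) ^ m * Q := by
  set mk := Ideal.Quotient.mk (Ideal.span {A}) with hmk
  obtain ⟨p, rfl⟩ := Ideal.Quotient.mk_surjective P
  have hmkC : ∀ d : ℤ, mk (C d) = (d : Polynomial ℤ ⧸ Ideal.span {A}) := by
    intro d
    have h1 : (C d : Polynomial ℤ) = (d : Polynomial ℤ) := by simp
    rw [h1, map_intCast]
  refine ⟨fun n => (digSeq A p n).coeff 0 % A.coeff 0, ⟨?_, ?_⟩, ?_⟩
  · intro n
    exact ⟨Int.emod_nonneg _ (by omega), Int.emod_lt_of_pos _ (by omega)⟩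
  · intro m
    obtain ⟨s, hs⟩ := digSeq_telescope A p m
    refine ⟨mk (digSeq A p m), ?_⟩
    have hmem : mk (p - ∑ n ∈ Finset.range m,
        C ((digSeq A p n).coeff 0 % A.coeff 0) * X ^ n) = mk (X ^ m * digSeq A p m) := by
      rw [Ideal.Quotient.eq]
      rw [hs]
      have : X ^ m * digSeq A p m + s * A - X ^ m * digSeq A p m = s * A := by ring
      rw [this]
      exact Ideal.mem_span_singleton.mpr ⟨s, mul_comm s A⟩
    simpa only [map_sub, map_sum, map_mul, map_pow, hmkC, zsmul_eq_mul] using hmem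
  · intro c ⟨hcN, hc⟩
    funext n
    induction n using Nat.strong_induction_on with
    | _ n ih =>
      obtain ⟨Q1, h1⟩ := hc (n + 1)
      obtain ⟨s, hs⟩ := digSeq_telescope A p (n + 1)
      -- our sequence's condition at n+1, in quotient form
      have h2 : mk p - ∑ k ∈ Finset.range (n + 1),
          ((digSeq A p k).coeff 0 % A.coeff 0) • (mk X) ^ k = (mk X) ^ (n + 1) * mk (digSeq A p (n + 1)) := by
        have hmem : mk (p - ∑ k ∈ Finset.range (n + 1),
            C ((digSeq A p k).coeff 0 % A.coeff 0) * X ^ k) = mk (X ^ (n + 1) * digSeq A p (n + 1)) := by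
          rw [Ideal.Quotient.eq, hs]
          have : X ^ (n + 1) * digSeq A p (n + 1) + s * A - X ^ (n + 1) * digSeq A p (n + 1) = s * A := by
            ring
          rw [this]
          exact Ideal.mem_span_singleton.mpr ⟨s, mul_comm s A⟩
        simpa only [map_sub, map_sum, map_mul, map_pow, hmkC, zsmul_eq_mul] using hmem
      simp only [zsmul_eq_mul] at h1 h2
      obtain ⟨d, hdd⟩ : ∃ d : ℤ, d = c n - ((digSeq A p n).coeff 0 % A.coeff 0) := ⟨_, rfl⟩
      have hsum : (∑ k ∈ Finset.range (n + 1),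
            ((digSeq A p k).coeff 0 % A.coeff 0 : ℤ) * (mk X) ^ k) -
          ∑ k ∈ Finset.range (n + 1), (c k : ℤ) * (mk X) ^ k
            = -(((d : ℤ) : Polynomial ℤ ⧸ Ideal.span {A}) * (mk X) ^ n) := by
        have hcongr : ∑ k ∈ Finset.range n, (c k : ℤ) * (mk X) ^ k
            = ∑ k ∈ Finset.range n, ((digSeq A p k).coeff 0 % A.coeff 0 : ℤ) * (mk X) ^ k := by
          refine Finset.sum_congr rfl fun k hk => ?_
          rw [ih k (Finset.mem_range.mp hk)]
        rw [Finset.sum_range_succ, Finset.sum_range_succ, hcongr]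
        push_cast [hdd]
        ring
      have hkey : ((d : ℤ) : Polynomial ℤ ⧸ Ideal.span {A}) * (mk X) ^ n
          = (mk X) ^ (n + 1) * (mk (digSeq A p (n + 1)) - Q1) := by
        linear_combination h2 - h1 + hsum
      obtain ⟨r, hr⟩ := Ideal.Quotient.mk_surjective (mk (digSeq A p (n + 1)) - Q1)
      have hlift : mk (C d * X ^ n) = mk (X ^ (n + 1) * r) := by
        rw [map_mul, map_mul, map_pow, map_pow, hmkC, hr]
        exact hkey
      rw [Ideal.Quotient.eq] at hlift
      obtain ⟨t, ht⟩ := Ideal.mem_span_singleton.mp hlift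
      have heq : C d * X ^ n = X ^ (n + 1) * r + t * A := by
        have : C d * X ^ n - X ^ (n + 1) * r = A * t := ht
        linear_combination this + mul_comm A t
      have hdvd : A.coeff 0 ∣ d := key_dvd A ha0 d n r t heq
      have hb1 := hcN n
      have hb2 : 0 ≤ (digSeq A p n).coeff 0 % A.coeff 0 ∧
          (digSeq A p n).coeff 0 % A.coeff 0 < A.coeff 0 :=
        ⟨Int.emod_nonneg _ (by omega), Int.emod_lt_of_pos _ (by omega)⟩
      have hd0 : d = 0 := Int.eq_zero_of_abs_lt_dvd hdvd (by
        rw [abs_lt]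
        constructor <;> linarith [hb1.1, hb1.2, hb2.1, hb2.2])
      linarith [hb1.1, hb2.1]
end
end

section
/- Let τ_{-2/3} : ℤ → ℤ be given by τ_{-2/3}(N) = -⌊-2N/3⌋. For any finite set I of consecutive integers, τ_{-2/3}^{-n}(I) is a finite set of consecutive integers for all n, and (#I - 1)(3/2)^n + 1 ≤ #τ_{-2/3}^{-n}(I) ≤ (#I + 1)(3/2)^n - 1. -/
noncomputable section

/-- The shift radix map for r = -2/3: τ(N) = -⌊-2N/3⌋. -/
def tauTwoThirds (N : ℤ) : ℤ := -⌊(-2 : ℚ) / 3 * (N : ℚ)⌋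

lemma tauTwoThirds_eq (M : ℤ) : tauTwoThirds M = (2 * M + 2) / 3 := by
  unfold tauTwoThirds
  have h : ((-2 : ℚ) / 3 * (M : ℚ)) = ((-2 * M : ℤ) : ℚ) / ((3 : ℕ) : ℚ) := by
    push_cast; ring
  rw [h, Rat.floor_intCast_div_natCast]
  omega

lemma tauTwoThirds_step (a b : ℤ) (hab : a ≤ b) :
    ∃ a₁ b₁ : ℤ, a₁ ≤ b₁ ∧
      (∀ M : ℤ, tauTwoThirds M ∈ Finset.Icc a b ↔ M ∈ Finset.Icc a₁ b₁) ∧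
      3 * (b - a + 1) - 1 ≤ 2 * (b₁ - a₁ + 1) ∧
      2 * (b₁ - a₁ + 1) ≤ 3 * (b - a + 1) + 1 := by
  refine ⟨-((2 - 3 * a) / 2), 3 * b / 2, by omega, ?_, by omega, by omega⟩
  intro M
  simp only [Finset.mem_Icc, tauTwoThirds_eq]
  omega

lemma card_Icc_real (a b : ℤ) (h : a ≤ b) :
    ((Finset.Icc a b).card : ℝ) = (b : ℝ) - a + 1 := by
  rw [Int.card_Icc]
  have h2 := Int.toNat_of_nonneg (show (0:ℤ) ≤ b + 1 - a by omega)
  have : (((b + 1 - a).toNat : ℤ) : ℝ) = ((b : ℝ) - a + 1) := by rw [h2]; push_cast; ring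
  exact_mod_cast this

/-- the n-th preimage of a finite set of consecutive integers under
τ_{-2/3} is a finite set of consecutive integers, of cardinality between
(#I-1)(3/2)^n + 1 and (#I+1)(3/2)^n - 1. -/
theorem tauTwoThirds_preimage_interval (a b : ℤ) (hab : a ≤ b) (n : ℕ) :
    ∃ a' b' : ℤ, a' ≤ b' ∧
      (∀ M : ℤ, tauTwoThirds^[n] M ∈ Finset.Icc a b ↔ M ∈ Finset.Icc a' b') ∧
      (((Finset.Icc a b).card : ℝ) - 1) * (3 / 2) ^ n + 1 ≤ ((Finset.Icc a' b').card : ℝ) ∧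
      ((Finset.Icc a' b').card : ℝ) ≤ (((Finset.Icc a b).card : ℝ) + 1) * (3 / 2) ^ n - 1 := by
  induction n with
  | zero =>
    refine ⟨a, b, hab, fun M => by simp, by simp, by simp⟩
  | succ n ih =>
    obtain ⟨a', b', hab', hiff, hlo, hhi⟩ := ih
    obtain ⟨a₁, b₁, hab₁, hiff₁, hlo₁, hhi₁⟩ := tauTwoThirds_step a' b' hab'
    refine ⟨a₁, b₁, hab₁, ?_, ?_, ?_⟩
    · intro M
      rw [Function.iterate_succ_apply, hiff (tauTwoThirds M), hiff₁]
    · rw [card_Icc_real a₁ b₁ hab₁]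
      rw [card_Icc_real a' b' hab'] at hlo
      have hb : (3 : ℝ) * ((b' : ℝ) - a' + 1) - 1 ≤ 2 * ((b₁ : ℝ) - a₁ + 1) := by
        exact_mod_cast hlo₁
      rw [pow_succ]
      nlinarith
    · rw [card_Icc_real a₁ b₁ hab₁]
      rw [card_Icc_real a' b' hab'] at hhi
      have hb : (2 : ℝ) * ((b₁ : ℝ) - a₁ + 1) ≤ 3 * ((b' : ℝ) - a' + 1) + 1 := by
        exact_mod_cast hhi₁
      rw [pow_succ]
      nlinarith
end
end

section
/- If t ∈ ℝ^d is an m-exclusive point of the collection {T_r(x) : x ∈ ℤ^d} (i.e., t belongs to exactly m tiles, where m is the minimal covering degree), then M_r t is also m-exclusive. -/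
open Matrix Filter

noncomputable section

lemma companion_mulVec {d : ℕ} (r : Fin d → ℝ) (x : Fin d → ℝ) (i : Fin d) :
    (companion r).mulVec x i =
      if h : (i : ℕ) + 1 < d then x ⟨(i : ℕ) + 1, h⟩ else -∑ j, r j * x j := by
  simp only [Matrix.mulVec, dotProduct, companion]
  split
  · rename_i h
    rw [Finset.sum_eq_single (⟨(i:ℕ)+1, h⟩ : Fin d)]
    · simp
    · intro b _ hb
      rw [if_neg, zero_mul]
      intro hc; exact hb (Fin.ext hc)
    · simp
  · simp [neg_mul, Finset.sum_neg_distrib]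

lemma mulVec_intToReal {d : ℕ} (r : Fin d → ℝ) (z : Fin d → ℤ) :
    (companion r).mulVec (intToReal z) =
      intToReal (srsTau r z) + digitVec (⌊srsDot r z⌋ - srsDot r z) := by
  funext i
  rw [Pi.add_apply, companion_mulVec]
  by_cases h : (i:ℕ) + 1 < d
  · simp [h, intToReal, srsTau, digitVec, Nat.ne_of_lt h]
  · have h2 : (i:ℕ) + 1 = d := Nat.le_antisymm i.isLt (Nat.not_lt.mp h)
    simp only [dif_neg h, intToReal, srsTau, digitVec, if_pos h2, dif_neg h, srsDot]
    push_cast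
    ring

lemma norm_digitVec {d : ℕ} (v : ℝ) : ‖(digitVec v : Fin d → ℝ)‖ ≤ |v| := by
  rw [pi_norm_le_iff_of_nonneg (abs_nonneg v)]
  intro i
  simp only [digitVec]
  split <;> simp [Real.norm_eq_abs, abs_nonneg]

lemma drift_iter {d : ℕ} (r : Fin d → ℝ) {C ρ : ℝ} (hC : 0 < C) (hρ0 : 0 ≤ ρ) (hρ1 : ρ < 1)
    (hb : ∀ (n : ℕ) (x : Fin d → ℝ), ‖((companion r) ^ n).mulVec x‖ ≤ C * ρ ^ n * ‖x‖)
    (mm k : ℕ) (z : Fin d → ℤ) :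
    ‖((companion r) ^ k).mulVec (intToReal ((srsTau r)^[mm] z))
      - ((companion r) ^ (k + mm)).mulVec (intToReal z)‖ ≤ C * ρ ^ k * (1 - ρ)⁻¹ := by
  have key : ∀ mm (z : Fin d → ℤ),
      ‖((companion r) ^ k).mulVec (intToReal ((srsTau r)^[mm] z))
        - ((companion r) ^ (k + mm)).mulVec (intToReal z)‖
        ≤ C * ρ ^ k * ∑ i ∈ Finset.range mm, ρ ^ i := by
    intro mm
    induction mm with
    | zero => intro z; simp
    | succ n ih =>
      intro z
      have h1 : (srsTau r)^[n+1] z = (srsTau r)^[n] (srsTau r z) :=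
        Function.iterate_succ_apply _ _ _
      have h2 : ((companion r) ^ (k + n)).mulVec (intToReal (srsTau r z))
          - ((companion r) ^ (k + (n+1))).mulVec (intToReal z)
          = -((companion r) ^ (k + n)).mulVec (digitVec (⌊srsDot r z⌋ - srsDot r z)) := by
        have : ((companion r) ^ (k + (n+1))).mulVec (intToReal z)
            = ((companion r) ^ (k + n)).mulVec ((companion r).mulVec (intToReal z)) := by
          rw [show k + (n+1) = (k+n) + 1 by ring, pow_succ, ← Matrix.mulVec_mulVec]
        rw [this, mulVec_intToReal, Matrix.mulVec_add]
        abel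
      have h3 : ‖((companion r) ^ (k + n)).mulVec (digitVec (⌊srsDot r z⌋ - srsDot r z))‖
          ≤ C * ρ ^ (k + n) := by
        calc _ ≤ C * ρ ^ (k+n) * ‖(digitVec (⌊srsDot r z⌋ - srsDot r z) : Fin d → ℝ)‖ :=
              hb _ _
          _ ≤ C * ρ ^ (k+n) * 1 := by
              apply mul_le_mul_of_nonneg_left
              · refine le_trans (norm_digitVec _) ?_
                rw [abs_le]
                constructor
                · linarith [Int.sub_one_lt_floor (srsDot r z)]
                · linarith [Int.floor_le (srsDot r z)]
              · positivity
          _ = C * ρ ^ (k+n) := mul_one _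
      calc ‖((companion r) ^ k).mulVec (intToReal ((srsTau r)^[n+1] z))
            - ((companion r) ^ (k + (n+1))).mulVec (intToReal z)‖
          = ‖(((companion r) ^ k).mulVec (intToReal ((srsTau r)^[n] (srsTau r z)))
              - ((companion r) ^ (k + n)).mulVec (intToReal (srsTau r z)))
            + (((companion r) ^ (k + n)).mulVec (intToReal (srsTau r z))
              - ((companion r) ^ (k + (n+1))).mulVec (intToReal z))‖ := by rw [h1]; abel_nf
        _ ≤ _ + _ := norm_add_le _ _
        _ ≤ C * ρ ^ k * ∑ i ∈ Finset.range n, ρ ^ i + C * ρ ^ (k + n) := by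
            gcongr
            · exact ih _
            · rw [h2, norm_neg]; exact h3
        _ = C * ρ ^ k * ∑ i ∈ Finset.range (n+1), ρ ^ i := by
            rw [Finset.sum_range_succ, mul_add, pow_add]; ring
  refine le_trans (key mm z) ?_
  apply mul_le_mul_of_nonneg_left
  · have h1ρ : 0 < 1 - ρ := by linarith
    rw [inv_eq_one_div, le_div_iff₀ h1ρ]
    have := geom_sum_mul ρ mm
    nlinarith [pow_nonneg hρ0 mm]
  · positivity

lemma companion_inj {d : ℕ} (hd : 0 < d) (r : Fin d → ℝ) (hr0 : r ⟨0, hd⟩ ≠ 0) :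
    Function.Injective ((companion r).mulVecLin) := by
  rw [← LinearMap.ker_eq_bot, LinearMap.ker_eq_bot']
  intro v hv
  have hv' : ∀ i, (companion r).mulVec v i = 0 := fun i => congrFun hv i
  have hnz : ∀ i : Fin d, (i : ℕ) ≠ 0 → v i = 0 := by
    intro i hi
    have hlt : (i : ℕ) - 1 + 1 < d := by omega
    have := hv' ⟨(i:ℕ) - 1, by omega⟩
    rw [companion_mulVec, dif_pos hlt] at this
    convert this using 2
    exact Fin.ext (by simp; omega)
  have hlast := hv' ⟨d - 1, by omega⟩
  rw [companion_mulVec, dif_neg (by simp; omega)] at hlast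
  have hsum : ∑ j, r j * v j = r ⟨0, hd⟩ * v ⟨0, hd⟩ := by
    rw [Finset.sum_eq_single (⟨0, hd⟩ : Fin d)]
    · intro b _ hb
      rw [hnz b (fun hc => hb (Fin.ext hc)), mul_zero]
    · simp
  rw [hsum] at hlast
  have h0 : v ⟨0, hd⟩ = 0 := by
    rcases mul_eq_zero.mp (neg_eq_zero.mp hlast) with h | h
    · exact absurd h hr0
    · exact h
  funext i
  by_cases hi : (i : ℕ) = 0
  · rw [show i = ⟨0, hd⟩ from Fin.ext hi]; exact h0
  · exact hnz i hi

lemma fiber_finite {d : ℕ} (hd : 0 < d) (r : Fin d → ℝ) (hr0 : r ⟨0, hd⟩ ≠ 0)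
    (x : Fin d → ℤ) : {z : Fin d → ℤ | srsTau r z = x}.Finite := by
  set S := {z : Fin d → ℤ | srsTau r z = x}
  -- on S, coordinates i ≥ 1 are determined by x
  have hdet : ∀ z ∈ S, ∀ i : Fin d, (i : ℕ) ≠ 0 →
      z i = x ⟨(i:ℕ) - 1, by omega⟩ := by
    intro z hz i hi
    have hlt : ((i:ℕ) - 1) + 1 < d := by omega
    have := congrFun hz ⟨(i:ℕ) - 1, by omega⟩
    rw [srsTau] at this
    simp only [dif_pos hlt] at this
    rw [← this]
    congr 1
    exact Fin.ext (by simp; omega)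
  have hinj : Set.InjOn (fun z : Fin d → ℤ => z ⟨0, hd⟩) S := by
    intro a ha b hb hab
    funext i
    by_cases hi : (i : ℕ) = 0
    · rw [show i = ⟨0, hd⟩ from Fin.ext hi]; exact hab
    · rw [hdet a ha i hi, hdet b hb i hi]
  apply Set.Finite.of_finite_image _ hinj
  -- bound the image
  set c : ℝ := ∑ i ∈ Finset.univ.erase (⟨0, hd⟩ : Fin d),
      r i * (x ⟨(i:ℕ) - 1, by omega⟩ : ℝ) with hc
  have hdot : ∀ z ∈ S, srsDot r z = r ⟨0, hd⟩ * (z ⟨0, hd⟩ : ℝ) + c := by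
    intro z hz
    rw [srsDot, ← Finset.add_sum_erase _ _ (Finset.mem_univ (⟨0, hd⟩ : Fin d)), hc]
    congr 1
    apply Finset.sum_congr rfl
    intro i hi
    have hi0 : (i : ℕ) ≠ 0 := by
      intro hcc
      exact (Finset.mem_erase.mp hi).1 (Fin.ext hcc)
    rw [hdet z hz i hi0]
  have hfloor : ∀ z ∈ S, |srsDot r z| ≤ |(x ⟨d-1, by omega⟩ : ℝ)| + 1 := by
    intro z hz
    have := congrFun hz ⟨d - 1, by omega⟩
    rw [srsTau] at this
    simp only [dif_neg (show ¬((d:ℕ) - 1 + 1 < d) by omega)] at this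
    have hfl : (⌊srsDot r z⌋ : ℝ) = -(x ⟨d-1, by omega⟩ : ℝ) := by
      rw [show ⌊srsDot r z⌋ = -(x ⟨d-1, by omega⟩) by omega]
      push_cast; ring
    have h1 := Int.floor_le (srsDot r z)
    have h2 := Int.sub_one_lt_floor (srsDot r z)
    rw [hfl] at h1 h2
    rw [abs_le]
    constructor <;> cases abs_cases ((x ⟨d-1, by omega⟩ : ℝ)) <;> linarith
  set B : ℝ := (|(x ⟨d-1, by omega⟩ : ℝ)| + 1 + |c|) / |r ⟨0, hd⟩|
  have himg : (fun z : Fin d → ℤ => z ⟨0, hd⟩) '' S ⊆ Set.Icc (-⌊B⌋ - 1) (⌊B⌋ + 1) := by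
    rintro n ⟨z, hz, rfl⟩
    have h1 := hfloor z hz
    have h2 := hdot z hz
    have hrpos : 0 < |r ⟨0, hd⟩| := abs_pos.mpr hr0
    have h3 : |r ⟨0, hd⟩| * |(z ⟨0, hd⟩ : ℝ)| ≤ |(x ⟨d-1, by omega⟩ : ℝ)| + 1 + |c| := by
      rw [← abs_mul]
      have : r ⟨0, hd⟩ * (z ⟨0, hd⟩ : ℝ) = srsDot r z - c := by rw [h2]; ring
      rw [this]
      calc |srsDot r z - c| ≤ |srsDot r z| + |c| := abs_sub _ _
        _ ≤ _ := by linarith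
    have h4 : |(z ⟨0, hd⟩ : ℝ)| ≤ B := by
      rw [le_div_iff₀ hrpos]
      linarith [h3]
    have h5 : ((z ⟨0, hd⟩ : ℝ)) ≤ B ∧ -B ≤ ((z ⟨0, hd⟩ : ℝ)) := abs_le.mp h4 |>.symm
    constructor
    · have : (-⌊B⌋ - 1 : ℝ) ≤ (z ⟨0, hd⟩ : ℝ) := by
        have := Int.lt_floor_add_one B; push_cast; linarith [h5.2]
      exact_mod_cast this
    · have : ((z ⟨0, hd⟩ : ℝ)) ≤ (⌊B⌋ + 1 : ℝ) := by
        have := Int.lt_floor_add_one B; push_cast; linarith [h5.1]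
      exact_mod_cast this
  exact Set.Finite.subset (Set.finite_Icc _ _) himg

lemma companion_continuous {d : ℕ} (r : Fin d → ℝ) :
    Continuous ((companion r).mulVec : (Fin d → ℝ) → (Fin d → ℝ)) := by
  have : ((companion r).mulVec : (Fin d → ℝ) → (Fin d → ℝ))
      = ((companion r).mulVecLin : (Fin d → ℝ) →ₗ[ℝ] (Fin d → ℝ)) := by
    funext v; simp [Matrix.mulVecLin]
  rw [this]
  exact LinearMap.continuous_of_finiteDimensional _

/-- forward: t ∈ T(y) → M t ∈ T(τ y). -/
lemma mem_tile_tau {d : ℕ} (r : Fin d → ℝ) {t : Fin d → ℝ} {y : Fin d → ℤ}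
    (h : t ∈ srsTile r y) : (companion r).mulVec t ∈ srsTile r (srsTau r y) := by
  obtain ⟨z, hz, hconv⟩ := h
  refine ⟨fun n => Nat.rec (srsTau r y) (fun k _ => z k) n, ?_, ?_⟩
  · intro n
    cases n with
    | zero => rfl
    | succ k =>
      show (srsTau r)^[k+1] (z k) = srsTau r y
      rw [Function.iterate_succ_apply', hz k]
  · rw [← tendsto_add_atTop_iff_nat 1]
    have heq : (fun n => ((companion r) ^ (n+1)).mulVec
        (intToReal (Nat.rec (srsTau r y) (fun k _ => z k) (n+1) : Fin d → ℤ)))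
        = (fun n => (companion r).mulVec (((companion r) ^ n).mulVec (intToReal (z n)))) := by
      funext n
      show ((companion r) ^ (n+1)).mulVec (intToReal (z n)) = _
      rw [pow_succ', ← Matrix.mulVec_mulVec]
    rw [heq]
    exact ((companion_continuous r).tendsto t).comp hconv

/-- backward: M t ∈ T(x) → ∃ y, τ y = x ∧ t ∈ T(y). -/
lemma mem_tile_back {d : ℕ} (hd : 0 < d) (r : Fin d → ℝ) (hr0 : r ⟨0, hd⟩ ≠ 0)
    (hcontr : srsContractive r) {t : Fin d → ℝ} {x : Fin d → ℤ}
    (h : (companion r).mulVec t ∈ srsTile r x) :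
    ∃ y : Fin d → ℤ, srsTau r y = x ∧ t ∈ srsTile r y := by
  obtain ⟨C, hC, ρ, hρ0, hρ1, hb⟩ := hcontr
  obtain ⟨z, hz, hconv⟩ := h
  -- inverse of M
  have hinj := companion_inj hd r hr0
  have hbij : Function.Bijective ((companion r).mulVecLin) :=
    ⟨hinj, (LinearMap.injective_iff_surjective).mp hinj⟩
  set e := LinearEquiv.ofBijective _ hbij with he
  have hsymm_cont : Continuous (e.symm : (Fin d → ℝ) → (Fin d → ℝ)) :=
    LinearMap.continuous_of_finiteDimensional _
  have hsymm_apply : ∀ v : Fin d → ℝ, e.symm ((companion r).mulVec v) = v := by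
    intro v
    have : (companion r).mulVec v = e v := rfl
    rw [this, LinearEquiv.symm_apply_apply]
  -- pigeonhole: find y hit infinitely often by n ↦ τ^[n] (z (n+1))
  set fib : Set (Fin d → ℤ) := {w | srsTau r w = x} with hfib
  have hfibfin : fib.Finite := fiber_finite hd r hr0 x
  have hFmem : ∀ n : ℕ, (srsTau r)^[n] (z (n+1)) ∈ fib := by
    intro n
    have h := hz (n+1)
    rw [Function.iterate_succ_apply'] at h
    exact h
  haveI : Finite fib := hfibfin
  obtain ⟨y, hy⟩ := Finite.exists_infinite_fiber
    (fun n : ℕ => (⟨(srsTau r)^[n] (z (n+1)), hFmem n⟩ : fib))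
  rw [Set.infinite_coe_iff] at hy
  set A : Set ℕ := {n | (srsTau r)^[n] (z (n+1)) = (y : Fin d → ℤ)} with hA
  have hAinf : A.Infinite := by
    apply Set.Infinite.mono _ hy
    intro n hn
    have : (⟨(srsTau r)^[n] (z (n+1)), hFmem n⟩ : fib) = y := hn
    exact congrArg Subtype.val this
  -- choose N k ∈ A with k < N k
  have hNex : ∀ k : ℕ, ∃ n, n ∈ A ∧ k < n := fun k => hAinf.exists_gt k
  choose N hNA hNgt using hNex
  refine ⟨(y : Fin d → ℤ), y.property, ?_⟩
  refine ⟨fun k => (srsTau r)^[N k - k] (z (N k + 1)), ?_, ?_⟩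
  · intro k
    rw [← Function.iterate_add_apply]
    rw [show k + (N k - k) = N k by have := hNgt k; omega]
    exact hNA k
  · -- convergence to t
    have hg : Tendsto (fun k => e.symm (((companion r) ^ (N k + 1)).mulVec
        (intToReal (z (N k + 1))))) atTop (nhds t) := by
      have h1 : Tendsto (fun k => N k + 1) atTop atTop := by
        apply tendsto_atTop_mono (fun k => by have := hNgt k; omega : ∀ k, k ≤ N k + 1) tendsto_id
      have h2 := (hsymm_cont.tendsto _).comp (hconv.comp h1)
      rw [hsymm_apply t] at h2
      exact h2
    have hmain : ∀ k, e.symm (((companion r) ^ (N k + 1)).mulVec (intToReal (z (N k + 1))))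
        = ((companion r) ^ (N k)).mulVec (intToReal (z (N k + 1))) := by
      intro k
      rw [pow_succ', ← Matrix.mulVec_mulVec, hsymm_apply]
    rw [funext hmain] at hg
    -- now squeeze with drift
    have hdiff : ∀ k, ‖((companion r) ^ k).mulVec (intToReal ((srsTau r)^[N k - k] (z (N k + 1))))
        - ((companion r) ^ (N k)).mulVec (intToReal (z (N k + 1)))‖ ≤ C * ρ ^ k * (1-ρ)⁻¹ := by
      intro k
      have := drift_iter r hC hρ0 hρ1 hb (N k - k) k (z (N k + 1))
      rwa [show k + (N k - k) = N k by have := hNgt k; omega] at this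
    have hzero : Tendsto (fun k => ((companion r) ^ k).mulVec
        (intToReal ((srsTau r)^[N k - k] (z (N k + 1))))
        - ((companion r) ^ (N k)).mulVec (intToReal (z (N k + 1)))) atTop (nhds 0) := by
      apply squeeze_zero_norm hdiff
      have : Tendsto (fun k : ℕ => C * ρ ^ k * (1-ρ)⁻¹) atTop (nhds (C * 0 * (1-ρ)⁻¹)) := by
        apply Tendsto.mul_const
        exact (tendsto_pow_atTop_nhds_zero_of_lt_one hρ0 hρ1).const_mul C
      simpa using this
    have := hzero.add hg
    simpa using this

/-- if t is an m-exclusive point (belongs to exactly m tiles, m the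
minimal covering degree), then M_r t is also m-exclusive. -/
theorem mulVec_exclusive (d : ℕ) (hd : 0 < d) (r : Fin d → ℝ)
    (hr0 : r ⟨0, hd⟩ ≠ 0) (hcontr : srsContractive r) (m : ℕ)
    (hmin : ∀ t : Fin d → ℝ, m ≤ {x : Fin d → ℤ | t ∈ srsTile r x}.ncard)
    (hex : ∃ t : Fin d → ℝ, {x : Fin d → ℤ | t ∈ srsTile r x}.ncard = m)
    (t : Fin d → ℝ) (ht : {x : Fin d → ℤ | t ∈ srsTile r x}.ncard = m) :
    {x : Fin d → ℤ | (companion r).mulVec t ∈ srsTile r x}.ncard = m := by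
  set A : Set (Fin d → ℤ) := {y | t ∈ srsTile r y} with hA
  set B : Set (Fin d → ℤ) := {x | (companion r).mulVec t ∈ srsTile r x} with hB
  have hBA : B = srsTau r '' A := by
    apply Set.Subset.antisymm
    · intro x hx
      obtain ⟨y, hy1, hy2⟩ := mem_tile_back hd r hr0 hcontr hx
      exact ⟨y, hy2, hy1⟩
    · rintro x ⟨y, hy, rfl⟩
      exact mem_tile_tau r hy
  by_cases hAfin : A.Finite
  · refine le_antisymm ?_ (hmin _)
    rw [hBA, ← ht]
    exact Set.ncard_image_le hAfin
  · have hAinf : A.Infinite := hAfin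
    have hm0 : m = 0 := by rw [← ht, hAinf.ncard]
    have hBinf : B.Infinite := by
      intro hBfin
      apply hAfin
      have hsub : A ⊆ ⋃ x ∈ B, {z : Fin d → ℤ | srsTau r z = x} := by
        intro y hy
        have hxB : srsTau r y ∈ B := by rw [hBA]; exact ⟨y, hy, rfl⟩
        exact Set.mem_biUnion hxB rfl
      exact (hBfin.biUnion (fun x _ => fiber_finite hd r hr0 x)).subset hsub
    rw [hBinf.ncard, hm0]
end
end
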